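/- arXiv:1809.04672 — 9 statements merged into one kernel-verified Lean document; each statement's English description precedes it below -/
import Mathlib

section
/- Let H be a complex Hilbert space and T a densely defined unbounded linear operator on H (a LinearPMap) whose adjoint satisfies T† = -T (T is skew-adjoint). Then for every nonzero real number s and every g ∈ H there exists a unique element f of the domain of T such that T f + s • f = g, and this f satisfies ‖f‖ ≤ |s|⁻¹ ‖g‖. -/
open scoped InnerProductSpace

namespace Stmt1Aux

variable {H : Type*} [NormedAddCommGroup H] [InnerProductSpace ℂ H] [CompleteSpace H]

lemma pmap_apply_eq {S₁ S₂ : H →ₗ.[ℂ] H} (h : S₁ = S₂) (x : H) (hx₁ : x ∈ S₁.domain)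
    (hx₂ : x ∈ S₂.domain) : S₁ ⟨x, hx₁⟩ = S₂ ⟨x, hx₂⟩ := by subst h; rfl

variable {T : H →ₗ.[ℂ] H}

lemma hdom (hadj : T.adjoint = -T) : T.domain = T.adjoint.domain := by
  rw [hadj]; rfl

lemma skew (hT : Dense (T.domain : Set H)) (hadj : T.adjoint = -T) (x y : T.domain) :
    ⟪(T x : H), (y : H)⟫_ℂ = -⟪(x : H), (T y : H)⟫_ℂ := by
  have h := LinearPMap.adjoint_isFormalAdjoint hT
  have hx : (x : H) ∈ T.adjoint.domain := (hdom hadj) ▸ x.2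
  have key := h ⟨(x : H), hx⟩ y
  rw [pmap_apply_eq hadj _ hx x.2, LinearPMap.neg_apply] at key
  simp only [Subtype.coe_eta] at key
  rw [inner_neg_left] at key
  linear_combination -key

lemma re_inner_self (hT : Dense (T.domain : Set H)) (hadj : T.adjoint = -T) (x : T.domain) :
    Complex.re ⟪(T x : H), (x : H)⟫_ℂ = 0 := by
  have h := skew hT hadj x x
  rw [← inner_conj_symm ((x : H)) ((T x : H))] at h
  have := congrArg Complex.re h
  simp only [Complex.neg_re, Complex.conj_re] at this
  linarith

lemma key_ineq (hT : Dense (T.domain : Set H)) (hadj : T.adjoint = -T) (s : ℝ) (f : T.domain) :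
    |s| * ‖(f : H)‖ ≤ ‖(T f : H) + (s : ℂ) • (f : H)‖ := by
  have hre := re_inner_self hT hadj f
  have hsq : ‖(T f : H) + (s : ℂ) • (f : H)‖ ^ 2
      = ‖(T f : H)‖ ^ 2 + 2 * Complex.re ⟪(T f : H), (s : ℂ) • (f : H)⟫_ℂ
        + ‖(s : ℂ) • (f : H)‖ ^ 2 := by
    exact_mod_cast @norm_add_sq ℂ _ _ _ _ (T f : H) ((s : ℂ) • (f : H))
  have h1 : Complex.re ⟪(T f : H), (s : ℂ) • (f : H)⟫_ℂ = 0 := by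
    rw [inner_smul_right]
    simp [Complex.mul_re, hre]
  have h2 : ‖(s : ℂ) • (f : H)‖ = |s| * ‖(f : H)‖ := by
    rw [norm_smul, Complex.norm_real, Real.norm_eq_abs]
  have h3 : (|s| * ‖(f : H)‖) ^ 2 ≤ ‖(T f : H) + (s : ℂ) • (f : H)‖ ^ 2 := by
    rw [hsq, h1, ← h2]
    nlinarith [sq_nonneg ‖(T f : H)‖]
  have h4 := Real.sqrt_le_sqrt h3
  rwa [Real.sqrt_sq (by positivity), Real.sqrt_sq (norm_nonneg _)] at h4

/-- If `fₙ → f` and `T fₙ → h`, then `f` is in the domain of `T` and `T f = h`. -/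
lemma closed_graph (hT : Dense (T.domain : Set H)) (hadj : T.adjoint = -T)
    (u : ℕ → T.domain) (f h : H)
    (hu : Filter.Tendsto (fun n => ((u n : H))) Filter.atTop (nhds f))
    (hTu : Filter.Tendsto (fun n => (T (u n) : H)) Filter.atTop (nhds h)) :
    ∃ hf : f ∈ T.domain, T ⟨f, hf⟩ = h := by
  have hkey : ∀ x : T.domain, ⟪-h, (x : H)⟫_ℂ = ⟪f, (T x : H)⟫_ℂ := by
    intro x
    have h1 : ∀ n, ⟪(T (u n) : H), (x : H)⟫_ℂ = -⟪((u n : H)), (T x : H)⟫_ℂ :=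
      fun n => skew hT hadj (u n) x
    have l1 : Filter.Tendsto (fun n => ⟪(T (u n) : H), (x : H)⟫_ℂ) Filter.atTop
        (nhds ⟪h, (x : H)⟫_ℂ) := hTu.inner tendsto_const_nhds
    have l2 : Filter.Tendsto (fun n => -⟪((u n : H)), (T x : H)⟫_ℂ) Filter.atTop
        (nhds (-⟪f, (T x : H)⟫_ℂ)) := (hu.inner tendsto_const_nhds).neg
    have := tendsto_nhds_unique (l1.congr (fun n => h1 n)) l2
    rw [inner_neg_left, this, neg_neg]
  have hfmem : f ∈ T.adjoint.domain :=
    LinearPMap.mem_adjoint_domain_of_exists f ⟨-h, hkey⟩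
  have happ : T.adjoint ⟨f, hfmem⟩ = -h := LinearPMap.adjoint_apply_eq hT _ hkey
  have hfmem' : f ∈ T.domain := (hdom hadj) ▸ hfmem
  refine ⟨hfmem', ?_⟩
  have heq := pmap_apply_eq hadj f hfmem hfmem'
  rw [happ, LinearPMap.neg_apply] at heq
  exact (neg_injective heq).symm

end Stmt1Aux

/-- Existence, uniqueness and a priori bound for the twisted equation `(T + s)f = g`
for a densely defined skew-adjoint operator `T` (i.e. `T† = -T`). -/
theorem stmt_1 {H : Type*} [NormedAddCommGroup H] [InnerProductSpace ℂ H] [CompleteSpace H]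
    (T : H →ₗ.[ℂ] H) (hT : Dense (T.domain : Set H)) (hadj : T.adjoint = -T)
    (s : ℝ) (hs : s ≠ 0) (g : H) :
    ∃ f : T.domain, (T f + (s : ℂ) • (f : H) = g ∧ ‖(f : H)‖ ≤ |s|⁻¹ * ‖g‖) ∧
      ∀ f' : T.domain, T f' + (s : ℂ) • ((f' : H)) = g → f' = f := by
  have hspos : (0 : ℝ) < |s| := abs_pos.mpr hs
  -- the operator L f = T f + s • f
  set L : T.domain →ₗ[ℂ] H := T.toFun + (s : ℂ) • T.domain.subtype with hL
  have hLapp : ∀ f : T.domain, L f = (T f : H) + (s : ℂ) • (f : H) := fun f => rfl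
  have key : ∀ f : T.domain, |s| * ‖(f : H)‖ ≤ ‖L f‖ := by
    intro f; rw [hLapp]; exact Stmt1Aux.key_ineq hT hadj s f
  -- the range of L
  set R : Submodule ℂ H := LinearMap.range L with hR
  -- R is closed
  have hRclosed : IsClosed (R : Set H) := by
    apply IsSeqClosed.isClosed
    intro b g hb hg
    choose u hu using hb
    have hbC : CauchySeq b := hg.cauchySeq
    have huC : CauchySeq (fun n => ((u n : H))) := by
      rw [Metric.cauchySeq_iff] at hbC ⊢
      intro ε hε
      obtain ⟨N, hN⟩ := hbC (ε * |s|) (by positivity)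
      refine ⟨N, fun m hm n hn => ?_⟩
      have h1 := hN m hm n hn
      have h2 : |s| * ‖((u m : H)) - ((u n : H))‖ ≤ ‖b m - b n‖ := by
        have := key (u m - u n)
        rw [map_sub, hu m, hu n] at this
        simpa using this
      rw [dist_eq_norm] at h1 ⊢
      calc ‖((u m : H)) - ((u n : H))‖ ≤ |s|⁻¹ * ‖b m - b n‖ := by
            rw [← mul_le_mul_iff_right₀ hspos, ← mul_assoc, mul_inv_cancel₀ (ne_of_gt hspos), one_mul]
            exact h2
        _ < |s|⁻¹ * (ε * |s|) := by
            apply mul_lt_mul_of_pos_left h1 (by positivity)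
        _ = ε := by field_simp
    obtain ⟨f, hf⟩ := cauchySeq_tendsto_of_complete huC
    have hTu : Filter.Tendsto (fun n => (T (u n) : H)) Filter.atTop (nhds (g - (s : ℂ) • f)) := by
      have : ∀ n, (T (u n) : H) = b n - (s : ℂ) • ((u n : H)) := by
        intro n; rw [← hu n, hLapp]; abel
      simp only [this]
      exact hg.sub (hf.const_smul _)
    obtain ⟨hfmem, hfeq⟩ := Stmt1Aux.closed_graph hT hadj u f (g - (s : ℂ) • f) hf hTu
    exact ⟨⟨f, hfmem⟩, by rw [hLapp, hfeq]; abel⟩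
  -- R has trivial orthogonal complement
  have hRorth : Rᗮ = ⊥ := by
    rw [Submodule.eq_bot_iff]
    intro v hv
    rw [Submodule.mem_orthogonal] at hv
    have hv' : ∀ x : T.domain, ⟪(T x : H) + (s : ℂ) • (x : H), v⟫_ℂ = 0 := by
      intro x
      exact hv _ ⟨x, rfl⟩
    have hkey : ∀ x : T.domain, ⟪-((s : ℂ) • v), (x : H)⟫_ℂ = ⟪v, (T x : H)⟫_ℂ := by
      intro x
      have h1 := hv' x
      rw [inner_add_left, inner_smul_left] at h1
      have h2 := congrArg (starRingEnd ℂ) h1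
      simp only [map_add, map_mul, map_zero, inner_conj_symm, Complex.conj_conj,
        Complex.conj_ofReal] at h2
      rw [inner_neg_left, inner_smul_left, Complex.conj_ofReal]
      linear_combination -h2
    have hvmem : v ∈ T.adjoint.domain :=
      LinearPMap.mem_adjoint_domain_of_exists v ⟨-((s : ℂ) • v), hkey⟩
    have happ : T.adjoint ⟨v, hvmem⟩ = -((s : ℂ) • v) :=
      LinearPMap.adjoint_apply_eq hT _ hkey
    have hvmem' : v ∈ T.domain := (Stmt1Aux.hdom hadj) ▸ hvmem
    have hTv : (T ⟨v, hvmem'⟩ : H) = (s : ℂ) • v := by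
      have := Stmt1Aux.pmap_apply_eq hadj v hvmem hvmem'
      rw [happ, LinearPMap.neg_apply] at this
      have := neg_injective this
      exact this.symm
    have hsk := Stmt1Aux.skew hT hadj ⟨v, hvmem'⟩ ⟨v, hvmem'⟩
    rw [hTv, inner_smul_left, inner_smul_right, Complex.conj_ofReal] at hsk
    have h3 : (2 * (s : ℂ)) * ⟪v, v⟫_ℂ = 0 := by linear_combination hsk
    rcases mul_eq_zero.mp h3 with h | h
    · exact absurd h (mul_ne_zero two_ne_zero (by exact_mod_cast hs))
    · exact inner_self_eq_zero.mp h
  -- Hence R = ⊤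
  have hRtop : R = ⊤ := by
    have h1 : Rᗮᗮ = ⊤ := by rw [hRorth, Submodule.bot_orthogonal_eq_top]
    rwa [Submodule.orthogonal_orthogonal_eq_closure,
      hRclosed.submodule_topologicalClosure_eq] at h1
  -- Existence
  obtain ⟨f, hf⟩ : ∃ f : T.domain, L f = g := by
    have : g ∈ R := hRtop ▸ Submodule.mem_top
    exact this
  refine ⟨f, ⟨by rw [← hLapp]; exact hf, ?_⟩, ?_⟩
  · have := key f
    rw [hf] at this
    rw [← mul_le_mul_iff_right₀ hspos, ← mul_assoc, mul_inv_cancel₀ (ne_of_gt hspos), one_mul]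
    exact this
  · intro f' hf'
    have hdiff : L (f' - f) = 0 := by
      rw [map_sub, hf, ← hLapp] at *
      rw [hf']
      simp [hf]
    have := key (f' - f)
    rw [hdiff, norm_zero] at this
    have h0 : ‖((f' - f : T.domain) : H)‖ = 0 := le_antisymm
      (by nlinarith [norm_nonneg ((f' - f : T.domain) : H)]) (norm_nonneg _)
    have : ((f' : H)) - ((f : H)) = 0 := by
      rw [← norm_eq_zero] at *
      simpa using h0
    have : (f' : H) = (f : H) := sub_eq_zero.mp this
    exact Subtype.ext this
end

section
/- Let a > 0 and let f : (0,∞) → ℂ be measurable with ∫₀^∞ |f(r)|² dr/r < ∞ and ∫₀^∞ |f(r)|² r^{-2a} dr/r < ∞. Then for every z ∈ ℂ with -a < Re z < 0 the integral ∫₀^∞ f(r) r^z dr/r converges absolutely, and the Mellin transform z ↦ mellin f z is holomorphic (complex differentiable) on the open vertical strip {z : -a < Re z < 0}. -/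
open MeasureTheory Set Real Filter Complex

lemma keyInt (a : ℝ) (f : ℝ → ℂ) (hf : Measurable f)
    (h0 : IntegrableOn (fun r => ‖f r‖ ^ 2 / r) (Set.Ioi 0))
    (h1 : IntegrableOn (fun r => ‖f r‖ ^ 2 * r ^ (-2 * a - 1)) (Set.Ioi 0))
    {σ : ℝ} (hσ1 : -a < σ) (hσ2 : σ < 0) :
    IntegrableOn (fun r => ‖f r‖ * r ^ (σ - 1)) (Set.Ioi 0) := by
  have hmeas : AEStronglyMeasurable (fun r => ‖f r‖ * r ^ (σ - 1))
      (volume.restrict (Set.Ioi (0:ℝ))) :=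
    (hf.norm.mul ((by measurability : Measurable fun r:ℝ => r ^ (σ - 1)))).aestronglyMeasurable
  rw [← Set.Ioc_union_Ioi_eq_Ioi (zero_le_one)]
  apply IntegrableOn.union
  · -- on Ioc 0 1
    have hint : IntegrableOn
        (fun r => (‖f r‖ ^ 2 * r ^ (-2 * a - 1) + r ^ (2*σ + 2*a - 1)) / 2)
        (Set.Ioc (0:ℝ) 1) := by
      apply Integrable.div_const
      apply Integrable.add (h1.mono_set Set.Ioc_subset_Ioi_self)
      exact (intervalIntegral.intervalIntegrable_rpow' (by linarith)).1
    refine Integrable.mono' hint (hmeas.mono_set Set.Ioc_subset_Ioi_self) ?_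
    filter_upwards [ae_restrict_mem measurableSet_Ioc] with r hr
    have hr0 : (0:ℝ) < r := hr.1
    have e1 : r ^ (σ - 1) = r ^ (-a - 1/2) * r ^ (σ + a - 1/2) := by
      rw [← Real.rpow_add hr0]; ring_nf
    have e2 : r ^ (-2*a - 1) = r ^ (-a - 1/2) * r ^ (-a - 1/2) := by
      rw [← Real.rpow_add hr0]; ring_nf
    have e3 : r ^ (2*σ + 2*a - 1) = r ^ (σ + a - 1/2) * r ^ (σ + a - 1/2) := by
      rw [← Real.rpow_add hr0]; ring_nf
    rw [Real.norm_of_nonneg (by positivity), e1, e2, e3]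
    nlinarith [sq_nonneg (‖f r‖ * r ^ (-a - 1/2) - r ^ (σ + a - 1/2)),
      norm_nonneg (f r), Real.rpow_nonneg hr0.le (-a - 1/2),
      Real.rpow_nonneg hr0.le (σ + a - 1/2)]
  · -- on Ioi 1
    have hint : IntegrableOn
        (fun r => (‖f r‖ ^ 2 / r + r ^ (2*σ - 1)) / 2) (Set.Ioi (1:ℝ)) := by
      apply Integrable.div_const
      exact Integrable.add (h0.mono_set (Set.Ioi_subset_Ioi zero_le_one))
        (integrableOn_Ioi_rpow_of_lt (by linarith) one_pos)
    refine Integrable.mono' hint (hmeas.mono_set (Set.Ioi_subset_Ioi zero_le_one)) ?_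
    filter_upwards [ae_restrict_mem measurableSet_Ioi] with r hr
    have hr0 : (0:ℝ) < r := lt_trans one_pos hr
    have e1 : r ^ (σ - 1) = r ^ (-(1:ℝ)/2) * r ^ (σ - 1/2) := by
      rw [← Real.rpow_add hr0]; ring_nf
    have e2' : ‖f r‖ ^ 2 / r = ‖f r‖ ^ 2 * (r ^ (-(1:ℝ)/2) * r ^ (-(1:ℝ)/2)) := by
      rw [← Real.rpow_add hr0, show (-(1:ℝ)/2 + -(1:ℝ)/2) = (-1:ℝ) by ring,
        Real.rpow_neg_one, div_eq_mul_inv]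
    have e3 : r ^ (2*σ - 1) = r ^ (σ - 1/2) * r ^ (σ - 1/2) := by
      rw [← Real.rpow_add hr0]; ring_nf
    rw [Real.norm_of_nonneg (by positivity), e1, e2', e3]
    nlinarith [sq_nonneg (‖f r‖ * r ^ (-(1:ℝ)/2) - r ^ (σ - 1/2)),
      norm_nonneg (f r), Real.rpow_nonneg hr0.le (-(1:ℝ)/2),
      Real.rpow_nonneg hr0.le (σ - 1/2)]


lemma logbd {ε : ℝ} (hε : 0 < ε) {t : ℝ} (ht : 0 < t) :
    |Real.log t| ≤ (t ^ ε + t ^ (-ε)) / ε := by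
  have h3 : (0:ℝ) ≤ t ^ (-ε) := Real.rpow_nonneg ht.le _
  have h3' : (0:ℝ) ≤ t ^ ε := Real.rpow_nonneg ht.le _
  rcases le_or_gt 1 t with h | h
  · rw [_root_.abs_of_nonneg (Real.log_nonneg h)]
    have h1 : Real.log t = Real.log (t ^ ε) / ε := by
      rw [Real.log_rpow ht]; field_simp
    have h2 : Real.log (t ^ ε) ≤ t ^ ε := by
      have := Real.log_le_sub_one_of_pos (Real.rpow_pos_of_pos ht ε)
      linarith
    rw [h1]
    gcongr
    linarith
  · rw [_root_.abs_of_nonpos (Real.log_nonpos ht.le h.le), ← Real.log_inv]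
    have h4 : t⁻¹ ^ ε = t ^ (-ε) := by
      rw [Real.inv_rpow ht.le, ← Real.rpow_neg ht.le]
    have h1 : Real.log t⁻¹ = Real.log (t⁻¹ ^ ε) / ε := by
      rw [Real.log_rpow (inv_pos.mpr ht)]; field_simp
    have h2 : Real.log (t⁻¹ ^ ε) ≤ t ^ (-ε) := by
      have := Real.log_le_sub_one_of_pos (Real.rpow_pos_of_pos (inv_pos.mpr ht) ε)
      rw [h4] at this ⊢
      linarith
    rw [h1]
    gcongr
    linarith


lemma mconv (a : ℝ) (f : ℝ → ℂ) (hf : Measurable f)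
    (h0 : IntegrableOn (fun r => ‖f r‖ ^ 2 / r) (Set.Ioi 0))
    (h1 : IntegrableOn (fun r => ‖f r‖ ^ 2 * r ^ (-2 * a - 1)) (Set.Ioi 0))
    {z : ℂ} (hz1 : -a < z.re) (hz2 : z.re < 0) : MellinConvergent f z := by
  refine Integrable.mono' (keyInt a f hf h0 h1 hz1 hz2) ?_ ?_
  · exact (((by measurability : Measurable fun t:ℝ => (t:ℂ) ^ (z-1))).mul hf).aestronglyMeasurable
  · filter_upwards [ae_restrict_mem measurableSet_Ioi] with t ht
    rw [norm_smul, Complex.norm_cpow_eq_rpow_re_of_pos ht, Complex.sub_re, Complex.one_re, mul_comm]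

/-- If `f` and `f·r^{-a}` lie in `L²((0,∞), dr/r)` with `a > 0`, then the Mellin transform
of `f` converges absolutely and is holomorphic on the strip `-a < Re z < 0`. -/
theorem stmt_5 (a : ℝ) (ha : 0 < a) (f : ℝ → ℂ) (hf : Measurable f)
    (h0 : IntegrableOn (fun r => ‖f r‖ ^ 2 / r) (Set.Ioi 0))
    (h1 : IntegrableOn (fun r => ‖f r‖ ^ 2 * r ^ (-2 * a - 1)) (Set.Ioi 0)) :
    (∀ z : ℂ, -a < z.re → z.re < 0 → MellinConvergent f z) ∧
      DifferentiableOn ℂ (mellin f) {z : ℂ | -a < z.re ∧ z.re < 0} := by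
  refine ⟨fun z hz1 hz2 => mconv a f hf h0 h1 hz1 hz2, ?_⟩
  rintro s ⟨hs1, hs2⟩
  refine DifferentiableAt.differentiableWithinAt ?_
  set F : ℂ → ℝ → ℂ := fun (z : ℂ) (t : ℝ) => (t : ℂ) ^ (z - 1) • f t with hF
  set F' : ℂ → ℝ → ℂ := fun (z : ℂ) (t : ℝ) => ((t : ℂ) ^ (z - 1) * Real.log t) • f t with hF'
  set ε : ℝ := min (s.re + a) (-s.re) / 3 with hε
  have hε0 : 0 < ε := by
    apply div_pos (lt_min (by linarith) (by linarith)) (by norm_num)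
  have hεdef : ε * 3 = (s.re + a) ⊓ (-s.re) := by rw [hε]; ring
  have hm1 : (s.re + a) ⊓ (-s.re) ≤ s.re + a := min_le_left _ _
  have hm2 : (s.re + a) ⊓ (-s.re) ≤ -s.re := min_le_right _ _
  have hεa : -a < s.re - 2 * ε := by linarith
  have hε1 : s.re + 2 * ε < 0 := by linarith
  set bound : ℝ → ℝ := fun t =>
    ε⁻¹ * (‖f t‖ * t ^ (s.re + 2*ε - 1) + 2 * (‖f t‖ * t ^ (s.re - 1))
      + ‖f t‖ * t ^ (s.re - 2*ε - 1)) with hbound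
  have h1' : ∀ᶠ z : ℂ in nhds s, AEStronglyMeasurable (F z)
      (volume.restrict <| Set.Ioi 0) :=
    Filter.Eventually.of_forall fun z =>
      (((by measurability : Measurable fun t:ℝ => (t:ℂ) ^ (z-1))).mul hf).aestronglyMeasurable
  have h2 : IntegrableOn (F s) (Set.Ioi (0:ℝ)) := mconv a f hf h0 h1 hs1 hs2
  have h3 : AEStronglyMeasurable (F' s) (volume.restrict <| Set.Ioi 0) :=
    ((((by measurability : Measurable fun t:ℝ => (t:ℂ) ^ (s-1))).mul
      (Complex.measurable_ofReal.comp Real.measurable_log)).mul hf).aestronglyMeasurable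
  have h4 : ∀ᵐ t : ℝ ∂volume.restrict (Set.Ioi 0),
      ∀ z : ℂ, z ∈ Metric.ball s ε → ‖F' z t‖ ≤ bound t := by
    filter_upwards [ae_restrict_mem measurableSet_Ioi] with t ht z hz
    have hre : |z.re - s.re| ≤ ε := by
      rw [Metric.mem_ball] at hz
      calc |z.re - s.re| = |(z - s).re| := by rw [Complex.sub_re]
        _ ≤ ‖z - s‖ := Complex.abs_re_le_norm _
        _ ≤ ε := by
            rw [Complex.dist_eq] at hz; exact hz.le
    have hn : ‖F' z t‖ = t ^ (z.re - 1) * |Real.log t| * ‖f t‖ := by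
      rw [hF', norm_smul, norm_mul, Complex.norm_cpow_eq_rpow_re_of_pos ht, Complex.sub_re, Complex.one_re,
        Complex.norm_real, Real.norm_eq_abs]
    have step1 : t ^ (z.re - 1) ≤ t ^ (s.re + ε - 1) + t ^ (s.re - ε - 1) := by
      rcases le_or_gt 1 t with h | h
      · refine le_add_of_le_of_nonneg (Real.rpow_le_rpow_of_exponent_le h ?_)
          (Real.rpow_nonneg (zero_le_one.trans h) _)
        have := abs_le.mp hre
        linarith [this.2]
      · refine le_add_of_nonneg_of_le (Real.rpow_nonneg ht.le _)
          (Real.rpow_le_rpow_of_exponent_ge ht h.le ?_)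
        have := abs_le.mp hre
        linarith [this.1]
    have step2 : |Real.log t| ≤ (t ^ ε + t ^ (-ε)) / ε := logbd hε0 ht
    have ht0 : (0:ℝ) < t := ht
    have step3 : t ^ (z.re - 1) * |Real.log t| * ‖f t‖ ≤
        (t ^ (s.re + ε - 1) + t ^ (s.re - ε - 1)) * ((t ^ ε + t ^ (-ε)) / ε) * ‖f t‖ := by
      refine mul_le_mul (mul_le_mul step1 step2 (abs_nonneg _) ?_) le_rfl (norm_nonneg _) ?_
      · exact add_nonneg (Real.rpow_nonneg ht0.le _) (Real.rpow_nonneg ht0.le _)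
      · apply mul_nonneg (add_nonneg (Real.rpow_nonneg ht0.le _) (Real.rpow_nonneg ht0.le _))
        apply div_nonneg (add_nonneg (Real.rpow_nonneg ht0.le _) (Real.rpow_nonneg ht0.le _)) hε0.le
    have expand : (t ^ (s.re + ε - 1) + t ^ (s.re - ε - 1)) * ((t ^ ε + t ^ (-ε)) / ε) * ‖f t‖
        = bound t := by
      have e1 : t ^ (s.re + ε - 1) * t ^ ε = t ^ (s.re + 2*ε - 1) := by
        rw [← Real.rpow_add ht]; ring_nf
      have e2 : t ^ (s.re + ε - 1) * t ^ (-ε) = t ^ (s.re - 1) := by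
        rw [← Real.rpow_add ht]; ring_nf
      have e3 : t ^ (s.re - ε - 1) * t ^ ε = t ^ (s.re - 1) := by
        rw [← Real.rpow_add ht]; ring_nf
      have e4 : t ^ (s.re - ε - 1) * t ^ (-ε) = t ^ (s.re - 2*ε - 1) := by
        rw [← Real.rpow_add ht]; ring_nf
      have key : (t ^ (s.re + ε - 1) + t ^ (s.re - ε - 1)) * ((t ^ ε + t ^ (-ε)) / ε) * ‖f t‖
          = ε⁻¹ * ((t ^ (s.re + ε - 1) * t ^ ε + t ^ (s.re + ε - 1) * t ^ (-ε)
            + (t ^ (s.re - ε - 1) * t ^ ε + t ^ (s.re - ε - 1) * t ^ (-ε))) * ‖f t‖) := by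
        rw [div_eq_inv_mul]
        ring
      rw [hbound, key, e1, e2, e3, e4]
      ring
    rw [hn, ← expand]
    exact step3
  have h5 : IntegrableOn bound (Set.Ioi (0:ℝ)) := by
    rw [hbound]
    exact (((keyInt a f hf h0 h1 (by linarith) (by linarith)).add
      ((keyInt a f hf h0 h1 (by linarith) hs2).const_mul 2)).add
      (keyInt a f hf h0 h1 (by linarith) (by linarith))).const_mul ε⁻¹
  have h6 : ∀ᵐ t : ℝ ∂volume.restrict (Set.Ioi 0),
      ∀ z : ℂ, z ∈ Metric.ball s ε → HasDerivAt (fun w : ℂ => F w t) (F' z t) z := by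
    filter_upwards [ae_restrict_mem measurableSet_Ioi] with t ht z _
    have ht' : (t : ℂ) ≠ 0 := Complex.ofReal_ne_zero.mpr (ne_of_gt ht)
    have u1 : HasDerivAt (fun w : ℂ => (t : ℂ) ^ (w - 1))
        ((t:ℂ) ^ (z - 1) * Real.log t) z := by
      convert ((hasDerivAt_id' z).sub_const 1).const_cpow (Or.inl ht') using 1
      rw [Complex.ofReal_log (le_of_lt ht)]
      ring
    exact u1.smul_const (f t)
  have main := hasDerivAt_integral_of_dominated_loc_of_deriv_le (Metric.ball_mem_nhds s hε0) h1' h2 h3 h4 h5 h6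
  exact main.2.differentiableAt
end

section
/- Let a > 0 and let f : (0,∞) → ℂ be differentiable, and suppose that the four functions f, r ↦ f(r) r^{-a}, r ↦ r f'(r), and r ↦ r f'(r) r^{-a} all lie in L²((0,∞), dr/r). Then for every c ∈ ℂ with -a < Re c < 0, the Mellin transforms of f and of r ↦ r f'(r) at c are given by absolutely convergent integrals and satisfy mellin (r ↦ r f'(r)) c = -c · (mellin f c). -/
open MeasureTheory Set Filter Complex
open scoped Topology

/-- AM-GM helper for rpow. -/
private lemma amgm_rpow (u t p q : ℝ) (hu : 0 ≤ u) (ht : 0 < t) :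
    u * t ^ (p + q) ≤ (u ^ 2 * t ^ (2 * p) + t ^ (2 * q)) / 2 := by
  have h := two_mul_le_add_sq (u * t ^ p) (t ^ q)
  have e1 : u * t ^ p * t ^ q = u * t ^ (p + q) := by
    rw [Real.rpow_add ht]; ring
  have e2 : (u * t ^ p) ^ 2 = u ^ 2 * t ^ (2 * p) := by
    rw [mul_pow, sq (t ^ p), ← Real.rpow_add ht]; ring_nf
  have e3 : (t ^ q) ^ 2 = t ^ (2 * q) := by
    rw [sq, ← Real.rpow_add ht]; ring_nf
  nlinarith [h, e1, e2, e3]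

private lemma norm_cpow_smul (c : ℂ) (G : ℝ → ℂ) {t : ℝ} (ht : 0 < t) :
    ‖(t : ℂ) ^ (c - 1) • G t‖ = ‖G t‖ * t ^ (c.re - 1) := by
  rw [norm_smul, Complex.norm_cpow_eq_rpow_re_of_pos ht,
    Complex.sub_re, Complex.one_re, mul_comm]

private lemma aesm_cpow_smul (c : ℂ) {G : ℝ → ℂ}
    (hm : AEStronglyMeasurable G (volume.restrict (Set.Ioi 0))) :
    AEStronglyMeasurable (fun t : ℝ => (t : ℂ) ^ (c - 1) • G t)
      (volume.restrict (Set.Ioi 0)) := by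
  refine AEStronglyMeasurable.smul (f := fun t : ℝ => (t : ℂ) ^ (c - 1)) ?_ hm
  refine (ContinuousOn.aestronglyMeasurable ?_ measurableSet_Ioi)
  exact fun t ht => ((continuousAt_cpow_const (ofReal_mem_slitPlane.2 ht)).comp
    Complex.continuous_ofReal.continuousAt).continuousWithinAt

/-- The key convergence lemma: L² conditions at both weights imply Mellin convergence
on the open strip. -/
private lemma mellinConvergent_of_L2 {a : ℝ} (ha : 0 < a) {c : ℂ}
    (hc1 : -a < c.re) (hc2 : c.re < 0) {G : ℝ → ℂ}
    (hm : AEStronglyMeasurable G (volume.restrict (Set.Ioi 0)))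
    (h1 : IntegrableOn (fun r => ‖G r‖ ^ 2 / r) (Set.Ioi 0))
    (h2 : IntegrableOn (fun r => ‖G r‖ ^ 2 * r ^ (-2 * a - 1)) (Set.Ioi 0)) :
    MellinConvergent G c := by
  set σ := c.re with hσ
  have hmeas : AEStronglyMeasurable (fun t : ℝ => (t : ℂ) ^ (c - 1) • G t)
      (volume.restrict (Set.Ioi 0)) := aesm_cpow_smul c hm
  have hIoc : IntegrableOn (fun t : ℝ => (t : ℂ) ^ (c - 1) • G t) (Set.Ioc 0 1) := by
    have hrpow : IntegrableOn (fun t : ℝ => t ^ (2 * (σ + a - 1/2))) (Set.Ioc 0 1) := by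
      have : IntegrableOn (fun t : ℝ => t ^ (2 * (σ + a - 1/2))) (Set.Ioo 0 1) := by
        rw [intervalIntegral.integrableOn_Ioo_rpow_iff zero_lt_one]; linarith
      exact this.congr_set_ae Ioo_ae_eq_Ioc.symm
    refine Integrable.mono' (((h2.mono_set Ioc_subset_Ioi_self).add hrpow).div_const 2)
      (hmeas.mono_set Ioc_subset_Ioi_self) ?_
    filter_upwards [ae_restrict_mem measurableSet_Ioc] with t ht
    have ht0 : 0 < t := ht.1
    rw [norm_cpow_smul c G ht0]
    have key := amgm_rpow ‖G t‖ t (-a - 1/2) (σ + a - 1/2) (norm_nonneg _) ht0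
    have e : (-a - 1/2) + (σ + a - 1/2) = σ - 1 := by ring
    have e2 : 2 * (-a - 1/2) = -2 * a - 1 := by ring
    rw [e, e2] at key
    exact key
  have hIoi : IntegrableOn (fun t : ℝ => (t : ℂ) ^ (c - 1) • G t) (Set.Ioi 1) := by
    have hrpow : IntegrableOn (fun t : ℝ => t ^ (2 * (σ - 1/2))) (Set.Ioi 1) := by
      apply integrableOn_Ioi_rpow_of_lt (by linarith) zero_lt_one
    refine Integrable.mono'
      (((h1.mono_set (Ioi_subset_Ioi zero_le_one)).add hrpow).div_const 2)
      (hmeas.mono_set (Ioi_subset_Ioi zero_le_one)) ?_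
    filter_upwards [ae_restrict_mem measurableSet_Ioi] with t ht
    have ht0 : 0 < t := lt_trans zero_lt_one ht
    rw [norm_cpow_smul c G ht0]
    have key := amgm_rpow ‖G t‖ t (-(1/2)) (σ - 1/2) (norm_nonneg _) ht0
    have e : (-(1/2) : ℝ) + (σ - 1/2) = σ - 1 := by ring
    have e2 : (2 : ℝ) * (-(1/2)) = -1 := by ring
    rw [e, e2] at key
    have e3 : ‖G t‖ ^ 2 * t ^ (-1 : ℝ) = ‖G t‖ ^ 2 / t := by
      rw [Real.rpow_neg_one, div_eq_mul_inv]
    rw [e3] at key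
    exact key
  have : IntegrableOn (fun t : ℝ => (t : ℂ) ^ (c - 1) • G t) (Set.Ioc 0 1 ∪ Set.Ioi 1) :=
    hIoc.union hIoi
  rwa [Set.Ioc_union_Ioi_eq_Ioi zero_le_one] at this

/-- The Mellin transform intertwines the Euler operator `r∂_r` with multiplication by `-c`
on the strip `-a < Re c < 0`: if `f`, `f·r^{-a}`, `r f'` and `(r f')·r^{-a}` belong to
`L²((0,∞), dr/r)`, then `mellin (r ↦ r f'(r)) c = -c · mellin f c`. -/
theorem stmt_7 (a : ℝ) (ha : 0 < a) (f f' : ℝ → ℂ)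
    (hdiff : ∀ r ∈ Set.Ioi (0 : ℝ), HasDerivAt f (f' r) r)
    (h1 : IntegrableOn (fun r => ‖f r‖ ^ 2 / r) (Set.Ioi 0))
    (h2 : IntegrableOn (fun r => ‖f r‖ ^ 2 * r ^ (-2 * a - 1)) (Set.Ioi 0))
    (h3 : IntegrableOn (fun (r : ℝ) => ‖(r : ℂ) * f' r‖ ^ 2 / r) (Set.Ioi 0))
    (h4 : IntegrableOn (fun (r : ℝ) => ‖(r : ℂ) * f' r‖ ^ 2 * r ^ (-2 * a - 1)) (Set.Ioi 0)) :
    ∀ c : ℂ, -a < c.re → c.re < 0 →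
      MellinConvergent f c ∧ MellinConvergent (fun r => (r : ℂ) * f' r) c ∧
        mellin (fun r => (r : ℂ) * f' r) c = -c * mellin f c := by
  intro c hc1 hc2
  set σ := c.re with hσ
  -- measurability
  have hfc : ContinuousOn f (Set.Ioi 0) := fun r hr =>
    (hdiff r hr).continuousAt.continuousWithinAt
  have hfm : AEStronglyMeasurable f (volume.restrict (Set.Ioi 0)) :=
    hfc.aestronglyMeasurable measurableSet_Ioi
  have hf'm : AEStronglyMeasurable (fun r : ℝ => (r : ℂ) * f' r)
      (volume.restrict (Set.Ioi 0)) := by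
    have hd : AEStronglyMeasurable (fun r : ℝ => (r : ℂ) * deriv f r)
        (volume.restrict (Set.Ioi 0)) :=
      (Complex.measurable_ofReal.mul (measurable_deriv f)).aestronglyMeasurable
    refine hd.congr ?_
    filter_upwards [ae_restrict_mem measurableSet_Ioi] with r hr
    rw [(hdiff r hr).deriv]
  have hMf : MellinConvergent f c := mellinConvergent_of_L2 ha hc1 hc2 hfm h1 h2
  have hMg : MellinConvergent (fun r => (r : ℂ) * f' r) c :=
    mellinConvergent_of_L2 ha hc1 hc2 hf'm h3 h4
  refine ⟨hMf, hMg, ?_⟩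
  -- the auxiliary functions
  set v : ℝ → ℂ := fun x => (x : ℂ) ^ c with hv
  set v' : ℝ → ℂ := fun x => c * (x : ℂ) ^ (c - 1) with hv'
  have hvd : ∀ x ∈ Set.Ioi (0 : ℝ), HasDerivAt v (v' x) x := fun x hx =>
    (Complex.hasStrictDerivAt_cpow_const
      (ofReal_mem_slitPlane.2 hx)).hasDerivAt.comp_ofReal
  -- integrability of the two pieces
  have hu'v : IntegrableOn (fun x => f' x * v x) (Set.Ioi 0) := by
    refine hMg.congr_fun (fun x hx => ?_) measurableSet_Ioi
    have hx0 : (x : ℂ) ≠ 0 := Complex.ofReal_ne_zero.2 (ne_of_gt hx)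
    dsimp only
    rw [smul_eq_mul, hv, Complex.cpow_sub _ _ hx0, Complex.cpow_one]
    field_simp
  have huv' : IntegrableOn (fun x => f x * v' x) (Set.Ioi 0) := by
    refine IntegrableOn.congr_fun (hMf.const_mul c) (fun x _ => ?_) measurableSet_Ioi
    simp only [smul_eq_mul, hv']
    ring
  have hsum : IntegrableOn (fun x => f' x * v x + f x * v' x) (Set.Ioi 0) := hu'v.add huv'
  -- the product function and its derivative
  set g : ℝ → ℂ := fun x => f x * v x with hg
  set gd : ℝ → ℂ := fun x => f' x * v x + f x * v' x with hgd
  have hgD : ∀ x ∈ Set.Ioi (0 : ℝ), HasDerivAt g (gd x) x := fun x hx =>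
    (hdiff x hx).mul (hvd x hx)
  -- norm identity
  have hnorm_g : ∀ x : ℝ, 0 < x → ‖g x‖ ^ 2 = ‖f x‖ ^ 2 * x ^ (2 * σ) := by
    intro x hx
    have hn : ‖g x‖ = ‖f x‖ * x ^ σ := by
      rw [hg]
      simp only [norm_mul, hv, Complex.norm_cpow_eq_rpow_re_of_pos hx]
      rfl
    have e : (x ^ σ) ^ 2 = x ^ (2 * σ) := by
      rw [sq, ← Real.rpow_add hx]; ring_nf
    rw [hn, mul_pow, e]
  -- limit at infinity
  have hLtop : Tendsto g atTop (𝓝 (limUnder atTop g)) :=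
    tendsto_limUnder_of_hasDerivAt_of_integrableOn_Ioi
      (fun x (hx : x ∈ Ioi (1:ℝ)) => hgD x (mem_Ioi.2 (lt_trans zero_lt_one (mem_Ioi.1 hx))))
      (hsum.mono_set (Ioi_subset_Ioi zero_le_one))
  have hLtop0 : limUnder atTop g = 0 := by
    set L := limUnder atTop g with hL
    by_contra hne
    have hpos : 0 < ‖L‖ := norm_pos_iff.2 hne
    have hev : ∀ᶠ x in atTop, ‖L‖ / 2 ≤ ‖g x‖ :=
      hLtop.norm.eventually (eventually_ge_nhds (by linarith))
    obtain ⟨M, hM⟩ := (hev.and (eventually_ge_atTop (1 : ℝ))).exists_forall_of_atTop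
    have hM1 : (1 : ℝ) ≤ max M 1 := le_max_right _ _
    have hM0 : (0 : ℝ) < max M 1 := lt_of_lt_of_le zero_lt_one hM1
    have hcontra : IntegrableOn (fun x : ℝ => x ^ (-2 * σ - 1)) (Set.Ioi (max M 1)) := by
      refine Integrable.mono'
        ((h1.mono_set (Ioi_subset_Ioi hM0.le)).const_mul ((2 / ‖L‖) ^ 2))
        (ContinuousOn.aestronglyMeasurable (fun x hx =>
          (Real.continuousAt_rpow_const x _ (Or.inl
            (ne_of_gt (lt_trans hM0 hx)))).continuousWithinAt) measurableSet_Ioi) ?_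
      filter_upwards [ae_restrict_mem measurableSet_Ioi] with x hx
      have hx0 : 0 < x := lt_trans hM0 hx
      obtain ⟨hg2, -⟩ := hM x (le_of_lt (lt_of_le_of_lt (le_max_left M 1) hx))
      have hfx : ‖f x‖ ^ 2 / x = ‖g x‖ ^ 2 * x ^ (-2 * σ - 1) := by
        rw [hnorm_g x hx0, mul_assoc, ← Real.rpow_add hx0]
        have e : 2 * σ + (-2 * σ - 1) = -1 := by ring
        rw [e, Real.rpow_neg_one, div_eq_mul_inv]
      have hgL : (‖L‖ / 2) ^ 2 ≤ ‖g x‖ ^ 2 := pow_le_pow_left₀ (by positivity) hg2 2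
      have hxp : (0 : ℝ) ≤ x ^ (-2 * σ - 1) := Real.rpow_nonneg hx0.le _
      rw [Real.norm_eq_abs, _root_.abs_of_nonneg hxp]
      have hle : (‖L‖ / 2) ^ 2 * x ^ (-2 * σ - 1) ≤ ‖f x‖ ^ 2 / x := by
        rw [hfx]; exact mul_le_mul_of_nonneg_right hgL hxp
      have hL2 : ((2 : ℝ) / ‖L‖) ^ 2 * (‖L‖ / 2) ^ 2 = 1 := by
        have h0 : ‖L‖ ≠ 0 := ne_of_gt hpos
        have h1' : (2 : ℝ) / ‖L‖ * (‖L‖ / 2) = 1 := by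
          rw [div_mul_div_comm, mul_comm ‖L‖ 2]; exact div_self (by positivity)
        rw [← mul_pow, h1', one_pow]
      calc x ^ (-2 * σ - 1) = ((2 : ℝ) / ‖L‖) ^ 2 * ((‖L‖ / 2) ^ 2 * x ^ (-2 * σ - 1)) := by
            rw [← mul_assoc, hL2, one_mul]
        _ ≤ (2 / ‖L‖) ^ 2 * (‖f x‖ ^ 2 / x) :=
            mul_le_mul_of_nonneg_left hle (by positivity)
    rw [integrableOn_Ioi_rpow_iff hM0] at hcontra
    linarith
  rw [hLtop0] at hLtop
  -- limit at zero, via the primitive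
  have hIcc : IntegrableOn gd (Set.Icc 0 1) :=
    (hsum.mono_set Ioc_subset_Ioi_self).congr_set_ae Ioc_ae_eq_Icc.symm
  set F : ℝ → ℂ := fun x => ∫ t in Set.Ioc 0 x, gd t with hF
  have hFcont : ContinuousOn F (Set.Icc 0 1) := intervalIntegral.continuousOn_primitive hIcc
  have hF0 : Tendsto F (𝓝[>] (0 : ℝ)) (𝓝 0) := by
    have h0 : F 0 = 0 := by simp [hF]
    have htd := (hFcont 0 ⟨le_refl 0, zero_le_one⟩).tendsto
    rw [h0] at htd
    refine htd.mono_left ?_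
    rw [← nhdsWithin_Ioc_eq_nhdsGT zero_lt_one]
    exact nhdsWithin_mono 0 Ioc_subset_Icc_self
  have hgval : ∀ r ∈ Set.Ioc (0 : ℝ) 1, g r = g 1 - F 1 + F r := by
    intro r hr
    have hii : IntervalIntegrable gd volume r 1 := by
      rw [intervalIntegrable_iff_integrableOn_Ioc_of_le hr.2]
      exact hsum.mono_set (fun t ht => lt_trans hr.1 ht.1)
    have hftc : ∫ t in r..1, gd t = g 1 - g r := by
      refine intervalIntegral.integral_eq_sub_of_hasDerivAt (fun t ht => ?_) hii
      rw [Set.uIcc_of_le hr.2] at ht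
      exact hgD t (lt_of_lt_of_le hr.1 ht.1)
    have hsplitF : F 1 = F r + ∫ t in Set.Ioc r 1, gd t := by
      rw [hF, ← setIntegral_union (Set.Ioc_disjoint_Ioc_of_le le_rfl) measurableSet_Ioc
        ((hsum.mono_set Ioc_subset_Ioi_self).mono_set
          (Set.Ioc_subset_Ioc_right hr.2 : Set.Ioc 0 r ⊆ Set.Ioc 0 1))
        (hsum.mono_set (fun t ht => lt_trans hr.1 ht.1)),
        Set.Ioc_union_Ioc_eq_Ioc hr.1.le hr.2]
    have hio : ∫ t in r..1, gd t = ∫ t in Set.Ioc r 1, gd t :=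
      intervalIntegral.integral_of_le hr.2
    have hkey : F 1 - F r = g 1 - g r := by rw [hsplitF, ← hio, hftc]; ring
    linear_combination hkey
  have hIocMem : Set.Ioc (0 : ℝ) 1 ∈ 𝓝[>] (0 : ℝ) :=
    Ioc_mem_nhdsGT_of_mem ⟨le_refl 0, zero_lt_one⟩
  have hLbot : Tendsto g (𝓝[>] (0 : ℝ)) (𝓝 (g 1 - F 1)) := by
    have ht : Tendsto (fun r => g 1 - F 1 + F r) (𝓝[>] (0 : ℝ)) (𝓝 (g 1 - F 1)) := by
      simpa using tendsto_const_nhds.add hF0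
    refine ht.congr' ?_
    filter_upwards [hIocMem] with r hr
    exact (hgval r hr).symm
  have hLbot0 : g 1 - F 1 = 0 := by
    set L0 := g 1 - F 1 with hL0
    by_contra hne
    have hpos : 0 < ‖L0‖ := norm_pos_iff.2 hne
    have hev : ∀ᶠ x in 𝓝[>] (0:ℝ), ‖L0‖ / 2 ≤ ‖g x‖ :=
      hLbot.norm.eventually (eventually_ge_nhds (by linarith))
    obtain ⟨ε, hε, hsub⟩ := mem_nhdsGT_iff_exists_Ioo_subset.1 hev
    have hε0 : (0 : ℝ) < ε := hε
    have hcontra : IntegrableOn (fun x : ℝ => x ^ (-2 * σ + (-2 * a - 1))) (Set.Ioo 0 ε) := by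
      refine Integrable.mono'
        ((h2.mono_set Ioo_subset_Ioi_self).const_mul ((2 / ‖L0‖) ^ 2))
        (ContinuousOn.aestronglyMeasurable (fun x hx =>
          (Real.continuousAt_rpow_const x _ (Or.inl
            (ne_of_gt hx.1))).continuousWithinAt) measurableSet_Ioo) ?_
      filter_upwards [ae_restrict_mem measurableSet_Ioo] with x hx
      have hx0 : 0 < x := hx.1
      have hg2 : ‖L0‖ / 2 ≤ ‖g x‖ := hsub hx
      have hfx : ‖f x‖ ^ 2 * x ^ (-2 * a - 1) = ‖g x‖ ^ 2 * x ^ (-2 * σ + (-2 * a - 1)) := by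
        rw [hnorm_g x hx0, mul_assoc, ← Real.rpow_add hx0]
        have e : 2 * σ + (-2 * σ + (-2 * a - 1)) = -2 * a - 1 := by ring
        rw [e]
      have hgL : (‖L0‖ / 2) ^ 2 ≤ ‖g x‖ ^ 2 := pow_le_pow_left₀ (by positivity) hg2 2
      have hxp : (0 : ℝ) ≤ x ^ (-2 * σ + (-2 * a - 1)) := Real.rpow_nonneg hx0.le _
      rw [Real.norm_eq_abs, _root_.abs_of_nonneg hxp]
      have hle : (‖L0‖ / 2) ^ 2 * x ^ (-2 * σ + (-2 * a - 1)) ≤ ‖f x‖ ^ 2 * x ^ (-2*a-1) := by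
        rw [hfx]; exact mul_le_mul_of_nonneg_right hgL hxp
      have hL2 : ((2 : ℝ) / ‖L0‖) ^ 2 * (‖L0‖ / 2) ^ 2 = 1 := by
        have h0 : ‖L0‖ ≠ 0 := ne_of_gt hpos
        have h1' : (2 : ℝ) / ‖L0‖ * (‖L0‖ / 2) = 1 := by
          rw [div_mul_div_comm, mul_comm ‖L0‖ 2]; exact div_self (by positivity)
        rw [← mul_pow, h1', one_pow]
      calc x ^ (-2 * σ + (-2 * a - 1))
          = ((2:ℝ) / ‖L0‖) ^ 2 * ((‖L0‖ / 2) ^ 2 * x ^ (-2 * σ + (-2 * a - 1))) := by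
            rw [← mul_assoc, hL2, one_mul]
        _ ≤ (2 / ‖L0‖) ^ 2 * (‖f x‖ ^ 2 * x ^ (-2*a-1)) :=
            mul_le_mul_of_nonneg_left hle (by positivity)
    rw [intervalIntegral.integrableOn_Ioo_rpow_iff hε0] at hcontra
    linarith
  rw [hLbot0] at hLbot
  -- integration by parts
  have hparts : ∫ x in Set.Ioi (0:ℝ), f' x * v x + f x * v' x = 0 - 0 :=
    integral_Ioi_deriv_mul_eq_sub hdiff hvd hsum hLbot hLtop
  have hsplit : (∫ x in Set.Ioi (0:ℝ), f' x * v x) + ∫ x in Set.Ioi (0:ℝ), f x * v' x = 0 := by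
    rw [← integral_add hu'v huv']
    simpa using hparts
  -- identify the two integrals with Mellin transforms
  have e1 : mellin (fun r => (r : ℂ) * f' r) c = ∫ x in Set.Ioi (0:ℝ), f' x * v x := by
    refine setIntegral_congr_fun measurableSet_Ioi (fun x hx => ?_)
    have hx0 : (x : ℂ) ≠ 0 := Complex.ofReal_ne_zero.2 (ne_of_gt hx)
    rw [smul_eq_mul, hv, Complex.cpow_sub _ _ hx0, Complex.cpow_one]
    field_simp
  have e2 : (∫ x in Set.Ioi (0:ℝ), f x * v' x) = c * mellin f c := by
    rw [mellin, ← integral_const_mul]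
    refine integral_congr_ae (Eventually.of_forall (fun x => ?_))
    simp only [smul_eq_mul, hv']
    ring
  rw [e1]
  linear_combination hsplit - e2
end

section
/- Let a > 0 and let f : (0,∞) → ℂ be differentiable, and suppose that the four functions f, r ↦ f(r) r^{a}, r ↦ r f'(r), and r ↦ r f'(r) r^{a} all lie in L²((0,∞), dr/r). Then the Mellin transform z ↦ mellin f z is holomorphic on the open strip {z : 0 < Re z < a}, and for every c with 0 < Re c < a one has mellin (r ↦ r f'(r)) c = -c · (mellin f c), all Mellin integrals converging absolutely. -/
open MeasureTheory Set Filter Topology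

lemma aesm_rpow (t : ℝ) {S : Set ℝ} (hS : MeasurableSet S) (h : S ⊆ Set.Ioi 0) :
    AEStronglyMeasurable (fun r : ℝ => r ^ t) (volume.restrict S) := by
  refine ContinuousOn.aestronglyMeasurable (fun r hr => ?_) hS
  exact (Real.continuousAt_rpow_const r t (Or.inl (ne_of_gt (h hr)))).continuousWithinAt

lemma aux_log_rpow_Ioc (m : ℕ) {t : ℝ} (ht : -1 < t) :
    IntegrableOn (fun r : ℝ => |Real.log r| ^ m * r ^ t) (Set.Ioc 0 1) := by
  set δ : ℝ := (t + 1) / (2 * (m + 1)) with hδdef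
  have hδ : 0 < δ := div_pos (by linarith) (by positivity)
  have hδm : δ * m ≤ (t + 1) / 2 := by
    rw [hδdef, div_mul_eq_mul_div, div_le_div_iff₀ (by positivity) two_pos]
    nlinarith [Nat.cast_nonneg (α := ℝ) m]
  have hexp : -1 < t - δ * m := by linarith
  have hmeas : AEStronglyMeasurable (fun r : ℝ => |Real.log r| ^ m * r ^ t)
      (volume.restrict (Set.Ioc 0 1)) :=
    (Real.measurable_log.abs.pow_const m).aestronglyMeasurable.mul
      (aesm_rpow t measurableSet_Ioc Set.Ioc_subset_Ioi_self)
  have hint : IntegrableOn (fun r : ℝ => δ⁻¹ ^ m * r ^ (t - δ * m)) (Set.Ioc 0 1) :=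
    (Iff.mpr integrableOn_Ioc_iff_integrableOn_Ioo
      ((intervalIntegral.integrableOn_Ioo_rpow_iff one_pos).mpr hexp)).const_mul _
  refine hint.mono' hmeas ?_
  filter_upwards [ae_restrict_mem measurableSet_Ioc] with r hr
  have hr0 : 0 < r := hr.1
  have hr1 : r ≤ 1 := hr.2
  have hlog : |Real.log r| ≤ r ^ (-δ) / δ := by
    rw [abs_of_nonpos (Real.log_nonpos hr0.le hr1)]
    have h := Real.log_le_rpow_div (x := r⁻¹) (inv_nonneg.2 hr0.le) hδ
    rw [Real.log_inv, Real.inv_rpow hr0.le, ← Real.rpow_neg hr0.le] at h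
    linarith
  have key : |Real.log r| ^ m * r ^ t ≤ (r ^ (-δ) / δ) ^ m * r ^ t :=
    mul_le_mul_of_nonneg_right (pow_le_pow_left₀ (abs_nonneg _) hlog m)
      (Real.rpow_nonneg hr0.le t)
  have heq : (r ^ (-δ) / δ) ^ m * r ^ t = δ⁻¹ ^ m * r ^ (t - δ * m) := by
    rw [div_pow, ← Real.rpow_natCast (r ^ (-δ)) m, ← Real.rpow_mul hr0.le,
      div_eq_mul_inv, mul_comm (r ^ (-δ * m)), mul_assoc, ← Real.rpow_add hr0]
    ring_nf
  rw [Real.norm_eq_abs, abs_of_nonneg (by positivity)]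
  rw [heq] at key
  exact key

lemma aux_log_rpow_Ioi (m : ℕ) {t : ℝ} (ht : t < -1) :
    IntegrableOn (fun r : ℝ => |Real.log r| ^ m * r ^ t) (Set.Ioi 1) := by
  set δ : ℝ := (-1 - t) / (2 * (m + 1)) with hδdef
  have hδ : 0 < δ := div_pos (by linarith) (by positivity)
  have hδm : δ * m ≤ (-1 - t) / 2 := by
    rw [hδdef, div_mul_eq_mul_div, div_le_div_iff₀ (by positivity) two_pos]
    nlinarith [Nat.cast_nonneg (α := ℝ) m]
  have hexp : t + δ * m < -1 := by linarith
  have hmeas : AEStronglyMeasurable (fun r : ℝ => |Real.log r| ^ m * r ^ t)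
      (volume.restrict (Set.Ioi 1)) :=
    (Real.measurable_log.abs.pow_const m).aestronglyMeasurable.mul
      (aesm_rpow t measurableSet_Ioi (Set.Ioi_subset_Ioi zero_le_one))
  have hint : IntegrableOn (fun r : ℝ => δ⁻¹ ^ m * r ^ (t + δ * m)) (Set.Ioi 1) :=
    ((integrableOn_Ioi_rpow_iff one_pos).mpr hexp).const_mul _
  refine hint.mono' hmeas ?_
  filter_upwards [ae_restrict_mem measurableSet_Ioi] with r hr
  have hr1 : (1:ℝ) ≤ r := le_of_lt hr
  have hr0 : 0 < r := lt_of_lt_of_le one_pos hr1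
  have hlog : |Real.log r| ≤ r ^ δ / δ := by
    rw [abs_of_nonneg (Real.log_nonneg hr1)]
    exact Real.log_le_rpow_div hr0.le hδ
  have key : |Real.log r| ^ m * r ^ t ≤ (r ^ δ / δ) ^ m * r ^ t :=
    mul_le_mul_of_nonneg_right (pow_le_pow_left₀ (abs_nonneg _) hlog m)
      (Real.rpow_nonneg hr0.le t)
  have heq : (r ^ δ / δ) ^ m * r ^ t = δ⁻¹ ^ m * r ^ (t + δ * m) := by
    rw [div_pow, ← Real.rpow_natCast (r ^ δ) m, ← Real.rpow_mul hr0.le,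
      div_eq_mul_inv, mul_comm (r ^ (δ * m)), mul_assoc, ← Real.rpow_add hr0]
    ring_nf
  rw [Real.norm_eq_abs, abs_of_nonneg (by positivity)]
  rw [heq] at key
  exact key

lemma aux_min_integrable {s a : ℝ} (hs : 0 < s) (hsa : s < a) (m : ℕ) :
    IntegrableOn (fun r : ℝ =>
      |Real.log r| ^ m * min (r ^ (2*s-1)) (r ^ (2*s-2*a-1))) (Set.Ioi 0) := by
  have hsplit : Set.Ioc (0:ℝ) 1 ∪ Set.Ioi 1 = Set.Ioi 0 := Set.Ioc_union_Ioi_eq_Ioi zero_le_one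
  rw [← hsplit]
  have hmeas : ∀ {S : Set ℝ}, MeasurableSet S → S ⊆ Set.Ioi 0 →
      AEStronglyMeasurable (fun r : ℝ =>
        |Real.log r| ^ m * min (r ^ (2*s-1)) (r ^ (2*s-2*a-1))) (volume.restrict S) := by
    intro S hS hsub
    exact (Real.measurable_log.abs.pow_const m).aestronglyMeasurable.mul
      ((aesm_rpow _ hS hsub).inf (aesm_rpow _ hS hsub))
  apply IntegrableOn.union
  · refine (aux_log_rpow_Ioc m (t := 2*s-1) (by linarith)).mono'
      (hmeas measurableSet_Ioc Set.Ioc_subset_Ioi_self) ?_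
    filter_upwards [ae_restrict_mem measurableSet_Ioc] with r hr
    have hr0 : 0 < r := hr.1
    rw [Real.norm_eq_abs, abs_of_nonneg (by positivity)]
    exact mul_le_mul_of_nonneg_left (min_le_left _ _) (by positivity)
  · refine (aux_log_rpow_Ioi m (t := 2*s-2*a-1) (by linarith)).mono'
      (hmeas measurableSet_Ioi (Set.Ioi_subset_Ioi zero_le_one)) ?_
    filter_upwards [ae_restrict_mem measurableSet_Ioi] with r hr
    have hr0 : 0 < r := lt_trans one_pos hr
    rw [Real.norm_eq_abs, abs_of_nonneg (by positivity)]
    exact mul_le_mul_of_nonneg_left (min_le_right _ _) (by positivity)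

/-- Key Cauchy–Schwarz / AM-GM estimate. -/
lemma keyA {g : ℝ → ℂ} (hg : AEStronglyMeasurable g (volume.restrict (Set.Ioi 0)))
    {a : ℝ} (h1 : IntegrableOn (fun r => ‖g r‖ ^ 2 / r) (Set.Ioi 0))
    (h2 : IntegrableOn (fun r => ‖g r‖ ^ 2 * r ^ (2 * a - 1)) (Set.Ioi 0))
    {s : ℝ} (hs0 : 0 < s) (hsa : s < a) (m : ℕ) :
    IntegrableOn (fun r : ℝ => ‖g r‖ * (|Real.log r| ^ m * r ^ (s - 1))) (Set.Ioi 0) := by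
  have hint : IntegrableOn (fun r : ℝ =>
      (‖g r‖ ^ 2 / r + ‖g r‖ ^ 2 * r ^ (2*a-1)
        + |Real.log r| ^ (2*m) * min (r ^ (2*s-1)) (r ^ (2*s-2*a-1))) / 2) (Set.Ioi 0) :=
    ((h1.add h2).add (aux_min_integrable hs0 hsa (2*m))).div_const 2
  refine hint.mono' ?_ ?_
  · exact hg.norm.mul ((Real.measurable_log.abs.pow_const m).aestronglyMeasurable.mul
      (aesm_rpow _ measurableSet_Ioi le_rfl))
  filter_upwards [ae_restrict_mem measurableSet_Ioi] with r hr
  have hr0 : 0 < r := hr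
  set x := ‖g r‖ with hx
  set L := |Real.log r| ^ m with hL
  set u := r ^ (s-1) with hu
  have hx0 : 0 ≤ x := norm_nonneg _
  have hL0 : 0 ≤ L := by positivity
  have hu0 : 0 ≤ u := Real.rpow_nonneg hr0.le _
  have hL2 : L ^ 2 = |Real.log r| ^ (2*m) := by rw [hL, ← pow_mul, mul_comm]
  have hu2 : u ^ 2 = r ^ ((s-1)*2) := by
    rw [hu, ← Real.rpow_natCast (r ^ (s-1)) 2, ← Real.rpow_mul hr0.le]
    norm_num
  rw [Real.norm_eq_abs, abs_of_nonneg (by positivity)]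
  rcases le_total r 1 with hr1 | hr1
  · -- use the x²/r term
    have hmin : min (r ^ (2*s-1)) (r ^ (2*s-2*a-1)) = r ^ (2*s-1) :=
      min_eq_left (Real.rpow_le_rpow_of_exponent_ge hr0 hr1 (by linarith))
    have hval : (L*u)^2 * r = |Real.log r| ^ (2*m) * r ^ (2*s-1) := by
      have hstep : r ^ ((s-1)*2) * r = r ^ (2*s-1) := by
        nth_rewrite 2 [← Real.rpow_one r]
        rw [← Real.rpow_add hr0]; ring_nf
      rw [mul_pow, hL2, hu2, mul_assoc, hstep]
    have amgm : x * (L * u) ≤ (x^2 / r + (L*u)^2 * r) / 2 := by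
      have key : 2 * (x * (L * u)) * r ≤ x^2 + (L*u)^2 * r^2 := by
        nlinarith [sq_nonneg (x - L*u*r)]
      have h2' : x * (L * u) ≤ (x^2 + (L*u)^2 * r^2) / (2*r) := by
        rw [le_div_iff₀ (by positivity)]; linarith
      have heq2 : (x^2 + (L*u)^2 * r^2) / (2*r) = (x^2 / r + (L*u)^2 * r) / 2 := by
        field_simp
      rw [← heq2]; exact h2'
    have hterm : 0 ≤ x^2 * r ^ (2*a-1) := by positivity
    rw [hmin]
    rw [hval] at amgm
    calc x * (L * u) ≤ (x^2 / r + |Real.log r| ^ (2*m) * r ^ (2*s-1)) / 2 := amgm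
      _ ≤ (x^2 / r + x^2 * r ^ (2*a-1) + |Real.log r| ^ (2*m) * r ^ (2*s-1)) / 2 := by
          linarith
  · -- r ≥ 1 : use the x²·r^{2a-1} term
    have hmin : min (r ^ (2*s-1)) (r ^ (2*s-2*a-1)) = r ^ (2*s-2*a-1) :=
      min_eq_right (Real.rpow_le_rpow_of_exponent_le hr1 (by linarith))
    set w := r ^ (2*a-1) with hw
    have hw0 : 0 < w := Real.rpow_pos_of_pos hr0 _
    have hval : (L*u)^2 / w = |Real.log r| ^ (2*m) * r ^ (2*s-2*a-1) := by
      rw [mul_pow, hL2, hu2, hw, mul_div_assoc]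
      congr 1
      rw [← Real.rpow_sub hr0]
      ring_nf
    have amgm : x * (L * u) ≤ (x^2 * w + (L*u)^2 / w) / 2 := by
      have key : 2 * (x * (L * u)) * w ≤ x^2 * w^2 + (L*u)^2 := by
        nlinarith [sq_nonneg (x*w - L*u)]
      have h2' : x * (L * u) ≤ (x^2 * w^2 + (L*u)^2) / (2*w) := by
        rw [le_div_iff₀ (by positivity)]; linarith
      have heq2 : (x^2 * w^2 + (L*u)^2) / (2*w) = (x^2 * w + (L*u)^2 / w) / 2 := by
        field_simp
      rw [← heq2]; exact h2'
    have hterm : 0 ≤ x^2 / r := by positivity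
    rw [hmin]
    rw [hval] at amgm
    calc x * (L * u) ≤ (x^2 * w + |Real.log r| ^ (2*m) * r ^ (2*s-2*a-1)) / 2 := amgm
      _ ≤ (x^2 / r + x^2 * w + |Real.log r| ^ (2*m) * r ^ (2*s-2*a-1)) / 2 := by
          linarith

lemma keyConv {a : ℝ} {g : ℝ → ℂ}
    (hg : AEStronglyMeasurable g (volume.restrict (Set.Ioi 0)))
    (h1 : IntegrableOn (fun r => ‖g r‖ ^ 2 / r) (Set.Ioi 0))
    (h2 : IntegrableOn (fun r => ‖g r‖ ^ 2 * r ^ (2 * a - 1)) (Set.Ioi 0))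
    {w : ℂ} (hw1 : 0 < w.re) (hw2 : w.re < a) : MellinConvergent g w := by
  have hker : AEStronglyMeasurable (fun t : ℝ => (t : ℂ) ^ (w - 1))
      (volume.restrict (Set.Ioi 0)) := by
    refine ContinuousOn.aestronglyMeasurable (fun t ht => ?_) measurableSet_Ioi
    exact (Complex.continuousAt_ofReal_cpow_const _ _ (Or.inr (ne_of_gt ht))).continuousWithinAt
  have hbd := keyA hg h1 h2 hw1 hw2 0
  have : IntegrableOn (fun t : ℝ => (t : ℂ) ^ (w - 1) • g t) (Set.Ioi 0) := by
    refine hbd.mono' (hker.smul hg) ?_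
    filter_upwards [ae_restrict_mem measurableSet_Ioi] with r hr
    rw [norm_smul, Complex.norm_cpow_eq_rpow_re_of_pos hr, Complex.sub_re,
      Complex.one_re, pow_zero, one_mul, mul_comm]
  exact this

set_option maxHeartbeats 1000000 in
lemma keyDiffOn {a : ℝ} {f : ℝ → ℂ}
    (hf : AEStronglyMeasurable f (volume.restrict (Set.Ioi 0)))
    (h1 : IntegrableOn (fun r => ‖f r‖ ^ 2 / r) (Set.Ioi 0))
    (h2 : IntegrableOn (fun r => ‖f r‖ ^ 2 * r ^ (2 * a - 1)) (Set.Ioi 0)) :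
    DifferentiableOn ℂ (mellin f) {z : ℂ | 0 < z.re ∧ z.re < a} := by
  rintro z ⟨hz1, hz2⟩
  refine DifferentiableAt.differentiableWithinAt ?_
  set ε := min z.re (a - z.re) / 2 with hεdef
  have hε0 : 0 < ε := div_pos (lt_min hz1 (by linarith)) two_pos
  have hε1 : ε ≤ z.re / 2 := by
    rw [hεdef]; exact div_le_div_of_nonneg_right (min_le_left _ _) (by norm_num)
  have hε2 : ε ≤ (a - z.re) / 2 := by
    rw [hεdef]; exact div_le_div_of_nonneg_right (min_le_right _ _) (by norm_num)
  have ht10 : 0 < z.re - ε := by linarith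
  have ht1a : z.re - ε < a := by linarith
  have ht20 : 0 < z.re + ε := by linarith
  have ht2a : z.re + ε < a := by linarith
  have hker : ∀ w : ℂ, AEStronglyMeasurable (fun t : ℝ => (t : ℂ) ^ (w - 1) • f t)
      (volume.restrict (Set.Ioi 0)) := by
    intro w
    refine AEStronglyMeasurable.smul (f := fun t : ℝ => (t : ℂ) ^ (w - 1)) ?_ hf
    refine ContinuousOn.aestronglyMeasurable (fun t ht => ?_) measurableSet_Ioi
    exact (Complex.continuousAt_ofReal_cpow_const _ _ (Or.inr (ne_of_gt ht))).continuousWithinAt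
  have hbound : ∀ᵐ (t : ℝ) ∂(volume.restrict (Set.Ioi (0:ℝ))), ∀ x ∈ Metric.ball z ε,
      ‖(Real.log t : ℂ) • ((t : ℂ) ^ (x - 1) • f t)‖
        ≤ ‖f t‖ * (|Real.log t| ^ 1 * t ^ (z.re - ε - 1))
          + ‖f t‖ * (|Real.log t| ^ 1 * t ^ (z.re + ε - 1)) := by
    filter_upwards [ae_restrict_mem measurableSet_Ioi] with t ht
    intro x hx
    have ht0 : (0:ℝ) < t := ht
    have hxre : |x.re - z.re| < ε := by
      have h1' : dist x z < ε := Metric.mem_ball.1 hx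
      rw [Complex.dist_eq] at h1'
      calc |x.re - z.re| = |(x - z).re| := by rw [Complex.sub_re]
        _ ≤ ‖x - z‖ := Complex.abs_re_le_norm _
        _ < ε := h1'
    have hxre1 : z.re - ε ≤ x.re := by have := abs_lt.1 hxre; linarith [this.1]
    have hxre2 : x.re ≤ z.re + ε := by have := abs_lt.1 hxre; linarith [this.2]
    have hnorm : ‖(Real.log t : ℂ) • ((t : ℂ) ^ (x - 1) • f t)‖
        = |Real.log t| * (t ^ (x.re - 1) * ‖f t‖) := by
      rw [norm_smul, norm_smul, Complex.norm_real, Real.norm_eq_abs,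
        Complex.norm_cpow_eq_rpow_re_of_pos ht0, Complex.sub_re, Complex.one_re]
    rw [hnorm]
    have hpow : t ^ (x.re - 1) ≤ t ^ (z.re - ε - 1) + t ^ (z.re + ε - 1) := by
      rcases le_total t 1 with ht1 | ht1
      · have hle : t ^ (x.re - 1) ≤ t ^ (z.re - ε - 1) :=
          Real.rpow_le_rpow_of_exponent_ge ht0 ht1 (by linarith)
        have h0' : (0:ℝ) ≤ t ^ (z.re + ε - 1) := Real.rpow_nonneg ht0.le _
        linarith
      · have hle : t ^ (x.re - 1) ≤ t ^ (z.re + ε - 1) :=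
          Real.rpow_le_rpow_of_exponent_le ht1 (by linarith)
        have h0' : (0:ℝ) ≤ t ^ (z.re - ε - 1) := Real.rpow_nonneg ht0.le _
        linarith
    calc |Real.log t| * (t ^ (x.re - 1) * ‖f t‖)
        ≤ |Real.log t| * ((t ^ (z.re - ε - 1) + t ^ (z.re + ε - 1)) * ‖f t‖) := by
          refine mul_le_mul_of_nonneg_left ?_ (abs_nonneg _)
          exact mul_le_mul_of_nonneg_right hpow (norm_nonneg _)
      _ = ‖f t‖ * (|Real.log t| ^ 1 * t ^ (z.re - ε - 1))
          + ‖f t‖ * (|Real.log t| ^ 1 * t ^ (z.re + ε - 1)) := by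
          rw [pow_one]; ring
  have hdiffp : ∀ᵐ (t : ℝ) ∂(volume.restrict (Set.Ioi (0:ℝ))), ∀ x ∈ Metric.ball z ε,
      HasDerivAt (fun w : ℂ => (t : ℂ) ^ (w - 1) • f t)
        ((Real.log t : ℂ) • ((t : ℂ) ^ (x - 1) • f t)) x := by
    filter_upwards [ae_restrict_mem measurableSet_Ioi] with t ht
    intro x _
    have ht0 : (0:ℝ) < t := ht
    have h0 : (t : ℂ) ≠ 0 := Complex.ofReal_ne_zero.2 (ne_of_gt ht0)
    have hd2 := (HasDerivAt.const_cpow ((hasDerivAt_id x).sub_const 1) (Or.inl h0)).mul_const (f t)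
    have heq : (Real.log t : ℂ) • ((t : ℂ) ^ (x - 1) • f t)
        = (t : ℂ) ^ (x - 1) * Complex.log t * 1 * f t := by
      rw [smul_eq_mul, smul_eq_mul, Complex.ofReal_log ht0.le]; ring
    rw [heq]
    exact hd2
  have hmain := hasDerivAt_integral_of_dominated_loc_of_deriv_le
    (𝕜 := ℂ) (μ := volume.restrict (Set.Ioi (0:ℝ)))
    (F := fun (w : ℂ) (t : ℝ) => (t : ℂ) ^ (w - 1) • f t)
    (F' := fun (w : ℂ) (t : ℝ) => (Real.log t : ℂ) • ((t : ℂ) ^ (w - 1) • f t))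
    (x₀ := z) (s := Metric.ball z ε)
    (bound := fun t => ‖f t‖ * (|Real.log t| ^ 1 * t ^ (z.re - ε - 1))
        + ‖f t‖ * (|Real.log t| ^ 1 * t ^ (z.re + ε - 1)))
    (Metric.ball_mem_nhds z hε0) (Filter.Eventually.of_forall hker) (keyConv hf h1 h2 hz1 hz2)
    (((Complex.measurable_ofReal.comp Real.measurable_log).aestronglyMeasurable).smul (hker z))
    hbound ((keyA hf h1 h2 ht10 ht1a 1).add (keyA hf h1 h2 ht20 ht2a 1)) hdiffp
  exact hmain.2.differentiableAt

set_option maxHeartbeats 1000000 in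
lemma keyIBP {a : ℝ} {f f' : ℝ → ℂ} {c : ℂ}
    (hdiff : ∀ r ∈ Set.Ioi (0 : ℝ), HasDerivAt f (f' r) r)
    (hf : AEStronglyMeasurable f (volume.restrict (Set.Ioi 0)))
    (h1 : IntegrableOn (fun r => ‖f r‖ ^ 2 / r) (Set.Ioi 0))
    (h2 : IntegrableOn (fun r => ‖f r‖ ^ 2 * r ^ (2 * a - 1)) (Set.Ioi 0))
    (hmc_f : MellinConvergent f c)
    (hmc_g : MellinConvergent (fun r : ℝ => (r : ℂ) * f' r) c)
    (hc1 : 0 < c.re) (hc2 : c.re < a) :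
    mellin (fun r : ℝ => (r : ℂ) * f' r) c = -c * mellin f c := by
  have hc0 : c ≠ 0 := by
    intro h; rw [h] at hc1; simp at hc1
  set F : ℝ → ℂ := fun r => (r : ℂ) ^ c * f r with hFdef
  set Fd : ℝ → ℂ := fun r => c * (r : ℂ) ^ (c - 1) * f r + (r : ℂ) ^ c * f' r with hFddef
  -- derivative of r ↦ (r:ℂ)^c
  have hcpow : ∀ {r : ℝ}, r ≠ 0 → HasDerivAt (fun y : ℝ => (y : ℂ) ^ c) (c * (r : ℂ) ^ (c - 1)) r := by
    intro r hr
    have hne : c - 1 ≠ -1 := by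
      intro h; apply hc0; linear_combination h
    have h := (hasDerivAt_ofReal_cpow_const' hr hne).const_mul c
    have he : (fun y : ℝ => c * ((y : ℂ) ^ (c - 1 + 1) / (c - 1 + 1))) = fun y : ℝ => (y : ℂ) ^ c := by
      funext y
      rw [sub_add_cancel, ← mul_div_assoc, mul_div_cancel_left₀ _ hc0]
    rwa [he] at h
  have hFderiv : ∀ r ∈ Set.Ioi (0 : ℝ), HasDerivAt F (Fd r) r := fun r hr =>
    (hcpow (ne_of_gt hr)).mul (hdiff r hr)
  -- decompose Fd
  have hFd_eq : ∀ r ∈ Set.Ioi (0 : ℝ),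
      Fd r = c • ((r : ℂ) ^ (c - 1) • f r) + (r : ℂ) ^ (c - 1) • ((r : ℂ) * f' r) := by
    intro r hr
    have h0 : (r : ℂ) ≠ 0 := Complex.ofReal_ne_zero.2 (ne_of_gt hr)
    have hcc : (r : ℂ) ^ c = (r : ℂ) ^ (c - 1) * (r : ℂ) := by
      have : (r : ℂ) ^ (c - 1 + 1) = (r : ℂ) ^ (c - 1) * (r : ℂ) ^ (1 : ℂ) :=
        Complex.cpow_add _ _ h0
      rw [sub_add_cancel, Complex.cpow_one] at this
      exact this
    simp only [hFddef, smul_eq_mul]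
    rw [hcc]; ring
  have hFd_int : IntegrableOn Fd (Set.Ioi 0) := by
    have hcomb : IntegrableOn (fun r : ℝ =>
        c • ((r : ℂ) ^ (c - 1) • f r) + (r : ℂ) ^ (c - 1) • ((r : ℂ) * f' r)) (Set.Ioi 0) :=
      (hmc_f.smul c).add hmc_g
    exact IntegrableOn.congr_fun hcomb (fun r hr => (hFd_eq r hr).symm) measurableSet_Ioi
  -- integrability of ‖f r‖² r^{2 c.re - 1}
  have hGint : IntegrableOn (fun r : ℝ => ‖f r‖ ^ 2 * r ^ (2 * c.re - 1)) (Set.Ioi 0) := by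
    refine (h1.add h2).mono' ?_ ?_
    · exact ((hf.norm.aemeasurable.pow_const 2).mul
        (aesm_rpow (2 * c.re - 1) measurableSet_Ioi le_rfl).aemeasurable).aestronglyMeasurable
    filter_upwards [ae_restrict_mem measurableSet_Ioi] with r hr
    have hr0 : 0 < r := hr
    rw [Real.norm_eq_abs, abs_of_nonneg (by positivity)]
    simp only [Pi.add_apply]
    rcases le_total r 1 with hr1 | hr1
    · have hle : r ^ (2 * c.re - 1) ≤ r ^ (-1 : ℝ) :=
        Real.rpow_le_rpow_of_exponent_ge hr0 hr1 (by linarith)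
      have hb : ‖f r‖ ^ 2 * r ^ (2 * c.re - 1) ≤ ‖f r‖ ^ 2 / r := by
        rw [div_eq_mul_inv, ← Real.rpow_neg_one r]
        exact mul_le_mul_of_nonneg_left hle (by positivity)
      have h0' : (0:ℝ) ≤ ‖f r‖ ^ 2 * r ^ (2 * a - 1) := by positivity
      linarith
    · have hle : r ^ (2 * c.re - 1) ≤ r ^ (2 * a - 1) :=
        Real.rpow_le_rpow_of_exponent_le hr1 (by linarith)
      have hb : ‖f r‖ ^ 2 * r ^ (2 * c.re - 1) ≤ ‖f r‖ ^ 2 * r ^ (2 * a - 1) :=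
        mul_le_mul_of_nonneg_left hle (by positivity)
      have h0' : (0:ℝ) ≤ ‖f r‖ ^ 2 / r := by positivity
      linarith
  -- squared norm identity
  have hFsq : ∀ {r : ℝ}, 0 < r → ‖f r‖ ^ 2 * r ^ (2 * c.re - 1) = ‖F r‖ ^ 2 / r := by
    intro r hr0
    have : ‖F r‖ = r ^ c.re * ‖f r‖ := by
      rw [hFdef]
      simp only []
      rw [norm_mul, Complex.norm_cpow_eq_rpow_re_of_pos hr0]
    have hexp : r ^ (c.re * ((2:ℕ):ℝ)) = r ^ (2 * c.re - 1) * r := by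
      rw [show c.re * ((2:ℕ):ℝ) = (2 * c.re - 1) + 1 by push_cast; ring,
        Real.rpow_add hr0, Real.rpow_one]
    rw [this, mul_pow, ← Real.rpow_natCast (r ^ c.re) 2, ← Real.rpow_mul hr0.le,
      eq_div_iff (ne_of_gt hr0), hexp]
    ring
  -- limit at +∞
  have hlim_top : Filter.Tendsto F Filter.atTop (nhds (limUnder Filter.atTop F)) :=
    tendsto_limUnder_of_hasDerivAt_of_integrableOn_Ioi
      (fun x hx => hFderiv x (lt_trans one_pos hx : (0:ℝ) < x))
      (hFd_int.mono_set (Set.Ioi_subset_Ioi zero_le_one))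
  set LT := limUnder Filter.atTop F with hLTdef
  have hLT : LT = 0 := by
    by_contra hne
    have hev : ∀ᶠ r in Filter.atTop, ‖LT‖ / 2 ≤ ‖F r‖ :=
      hlim_top.norm.eventually (eventually_ge_nhds (half_lt_self (norm_pos_iff.2 hne)))
    obtain ⟨M, hM⟩ := Filter.eventually_atTop.1 hev
    set M' := max M 1 with hM'def
    have hM'0 : (0:ℝ) < M' := lt_of_lt_of_le one_pos (le_max_right _ _)
    have hint : IntegrableOn (fun r : ℝ => r ^ (-1 : ℝ)) (Set.Ioi M') := by
      refine ((hGint.mono_set (Set.Ioi_subset_Ioi hM'0.le)).const_mul (4 / ‖LT‖ ^ 2)).mono'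
        (aesm_rpow _ measurableSet_Ioi (Set.Ioi_subset_Ioi hM'0.le)) ?_
      filter_upwards [ae_restrict_mem measurableSet_Ioi] with r hr
      have hrM : M' < r := hr
      have hr0 : 0 < r := hM'0.trans hrM
      have hFr : ‖LT‖ / 2 ≤ ‖F r‖ := hM r (le_of_lt (lt_of_le_of_lt (le_max_left _ _) hrM))
      have hsq : (‖LT‖ / 2) ^ 2 / r ≤ ‖F r‖ ^ 2 / r := by gcongr
      rw [← hFsq hr0] at hsq
      have hgoal : ‖LT‖ ^ 2 / 4 * r⁻¹ ≤ ‖f r‖ ^ 2 * r ^ (2 * c.re - 1) := by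
        have : (‖LT‖ / 2) ^ 2 / r = ‖LT‖ ^ 2 / 4 * r⁻¹ := by ring
        linarith [hsq, this ▸ hsq]
      rw [Real.norm_eq_abs, abs_of_nonneg (Real.rpow_nonneg hr0.le _), Real.rpow_neg_one]
      have hLTne : ‖LT‖ ≠ 0 := norm_ne_zero_iff.2 hne
      have hmul := mul_le_mul_of_nonneg_left hgoal (le_of_lt (by positivity : (0:ℝ) < 4 / ‖LT‖ ^ 2))
      have hone : 4 / ‖LT‖ ^ 2 * (‖LT‖ ^ 2 / 4) = 1 := by
        rw [div_mul_div_comm, mul_comm]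
        exact div_self (mul_ne_zero (pow_ne_zero 2 hLTne) four_ne_zero)
      calc r⁻¹ = 4 / ‖LT‖ ^ 2 * (‖LT‖ ^ 2 / 4) * r⁻¹ := by rw [hone, one_mul]
        _ = 4 / ‖LT‖ ^ 2 * (‖LT‖ ^ 2 / 4 * r⁻¹) := by ring
        _ ≤ 4 / ‖LT‖ ^ 2 * (‖f r‖ ^ 2 * r ^ (2 * c.re - 1)) := hmul
    rw [integrableOn_Ioi_rpow_iff hM'0] at hint
    linarith
  -- limit at 0⁺ via inversion
  have hGderiv : ∀ x ∈ Set.Ioi (0 : ℝ),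
      HasDerivAt (fun x : ℝ => F x⁻¹) (-(x ^ 2)⁻¹ • Fd x⁻¹) x := by
    intro x hx
    have hx0 : (0:ℝ) < x := hx
    have hxi : x⁻¹ ∈ Set.Ioi (0:ℝ) := inv_pos.2 hx0
    exact (hFderiv _ hxi).scomp x (hasDerivAt_inv hx0.ne')
  have hGd_int : IntegrableOn (fun x : ℝ => -(x ^ 2)⁻¹ • Fd x⁻¹) (Set.Ioi 1) := by
    have base : IntegrableOn (fun x : ℝ => x ^ ((-1:ℝ) - 1) • Fd (x ^ (-1:ℝ))) (Set.Ioi 0) :=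
      (integrableOn_Ioi_comp_rpow_iff' Fd (p := -1) (by norm_num)).mpr hFd_int
    have base2 : IntegrableOn (fun x : ℝ => (x ^ 2)⁻¹ • Fd x⁻¹) (Set.Ioi 0) := by
      refine IntegrableOn.congr_fun base (fun x hx => ?_) measurableSet_Ioi
      have hx0 : (0:ℝ) < x := hx
      rw [Real.rpow_neg_one]
      congr 1
      rw [show (-1:ℝ) - 1 = -2 by norm_num, Real.rpow_neg hx0.le,
        show (2:ℝ) = ((2:ℕ):ℝ) by norm_num, Real.rpow_natCast]
    have := (base2.mono_set (Set.Ioi_subset_Ioi zero_le_one)).neg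
    refine IntegrableOn.congr_fun this (fun x _ => ?_) measurableSet_Ioi
    simp [neg_smul]
  have hlim0' : Filter.Tendsto (fun x : ℝ => F x⁻¹) Filter.atTop
      (nhds (limUnder Filter.atTop (fun x : ℝ => F x⁻¹))) :=
    tendsto_limUnder_of_hasDerivAt_of_integrableOn_Ioi
      (fun x hx => hGderiv x (lt_trans one_pos hx : (0:ℝ) < x)) hGd_int
  set L0 := limUnder Filter.atTop (fun x : ℝ => F x⁻¹) with hL0def
  have hlim0 : Filter.Tendsto F (nhdsWithin 0 (Set.Ioi 0)) (nhds L0) := by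
    have hcomp := hlim0'.comp tendsto_inv_nhdsGT_zero
    refine Filter.Tendsto.congr' ?_ hcomp
    filter_upwards [self_mem_nhdsWithin] with r hr
    have : (0:ℝ) < r := hr
    simp [Function.comp, inv_inv]
  have hL0 : L0 = 0 := by
    by_contra hne
    have hev : ∀ᶠ r in nhdsWithin 0 (Set.Ioi 0), ‖L0‖ / 2 ≤ ‖F r‖ :=
      hlim0.norm.eventually (eventually_ge_nhds (half_lt_self (norm_pos_iff.2 hne)))
    obtain ⟨u, hu0, hu⟩ := mem_nhdsGT_iff_exists_Ioo_subset.1 hev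
    have hu0' : (0:ℝ) < u := hu0
    have hint : IntegrableOn (fun r : ℝ => r ^ (-1 : ℝ)) (Set.Ioo 0 u) := by
      refine ((hGint.mono_set Set.Ioo_subset_Ioi_self).const_mul (4 / ‖L0‖ ^ 2)).mono'
        (aesm_rpow _ measurableSet_Ioo Set.Ioo_subset_Ioi_self) ?_
      filter_upwards [ae_restrict_mem measurableSet_Ioo] with r hr
      have hr0 : 0 < r := hr.1
      have hFr : ‖L0‖ / 2 ≤ ‖F r‖ := hu hr
      have hsq : (‖L0‖ / 2) ^ 2 / r ≤ ‖F r‖ ^ 2 / r := by gcongr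
      rw [← hFsq hr0] at hsq
      have hgoal : ‖L0‖ ^ 2 / 4 * r⁻¹ ≤ ‖f r‖ ^ 2 * r ^ (2 * c.re - 1) := by
        have : (‖L0‖ / 2) ^ 2 / r = ‖L0‖ ^ 2 / 4 * r⁻¹ := by ring
        linarith [this ▸ hsq]
      rw [Real.norm_eq_abs, abs_of_nonneg (Real.rpow_nonneg hr0.le _), Real.rpow_neg_one]
      have hLTne : ‖L0‖ ≠ 0 := norm_ne_zero_iff.2 hne
      have hmul := mul_le_mul_of_nonneg_left hgoal (le_of_lt (by positivity : (0:ℝ) < 4 / ‖L0‖ ^ 2))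
      have hone : 4 / ‖L0‖ ^ 2 * (‖L0‖ ^ 2 / 4) = 1 := by
        rw [div_mul_div_comm, mul_comm]
        exact div_self (mul_ne_zero (pow_ne_zero 2 hLTne) four_ne_zero)
      calc r⁻¹ = 4 / ‖L0‖ ^ 2 * (‖L0‖ ^ 2 / 4) * r⁻¹ := by rw [hone, one_mul]
        _ = 4 / ‖L0‖ ^ 2 * (‖L0‖ ^ 2 / 4 * r⁻¹) := by ring
        _ ≤ 4 / ‖L0‖ ^ 2 * (‖f r‖ ^ 2 * r ^ (2 * c.re - 1)) := hmul
    rw [intervalIntegral.integrableOn_Ioo_rpow_iff hu0'] at hint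
    linarith
  -- the integral of Fd over (0,∞) is LT - L0 = 0
  have hsub : ∀ n : ℕ, Set.Ioc ((n : ℝ) + 1)⁻¹ ((n : ℝ) + 1) ⊆ Set.Ioi (0:ℝ) := by
    intro n x hx
    have : (0:ℝ) < ((n : ℝ) + 1)⁻¹ := by positivity
    exact lt_trans this hx.1
  have hcov : AECover (volume.restrict (Set.Ioi (0:ℝ))) Filter.atTop
      (fun n : ℕ => Set.Ioc ((n : ℝ) + 1)⁻¹ ((n : ℝ) + 1)) := by
    constructor
    · filter_upwards [ae_restrict_mem measurableSet_Ioi] with x hx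
      have hx0 : (0:ℝ) < x := hx
      have h1' : ∀ᶠ n : ℕ in Filter.atTop, ((n : ℝ) + 1)⁻¹ < x := by
        have htend : Filter.Tendsto (fun n : ℕ => ((n : ℝ) + 1)⁻¹) Filter.atTop (nhds 0) :=
          Filter.Tendsto.inv_tendsto_atTop
            (Filter.tendsto_atTop_add_const_right _ 1 tendsto_natCast_atTop_atTop)
        exact htend.eventually (eventually_lt_nhds hx0)
      have h2' : ∀ᶠ n : ℕ in Filter.atTop, x ≤ (n : ℝ) + 1 := by
        have := tendsto_natCast_atTop_atTop (R := ℝ)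
        filter_upwards [this.eventually_ge_atTop x] with n hn
        linarith
      filter_upwards [h1', h2'] with n hn1 hn2
      exact ⟨hn1, hn2⟩
    · exact fun n => measurableSet_Ioc
  have htend1 := hcov.integral_tendsto_of_countably_generated hFd_int
  have hin : ∀ n : ℕ, (∫ x in Set.Ioc ((n : ℝ) + 1)⁻¹ ((n : ℝ) + 1), Fd x
      ∂(volume.restrict (Set.Ioi 0))) = F ((n : ℝ) + 1) - F (((n : ℝ) + 1)⁻¹) := by
    intro n
    have hle : ((n : ℝ) + 1)⁻¹ ≤ (n : ℝ) + 1 := by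
      have h1' : ((n : ℝ) + 1)⁻¹ ≤ 1 := by
        rw [inv_le_one_iff₀]; right; linarith [Nat.cast_nonneg (α := ℝ) n]
      linarith [Nat.cast_nonneg (α := ℝ) n]
    rw [Measure.restrict_restrict measurableSet_Ioc,
      Set.inter_eq_self_of_subset_left (hsub n), ← intervalIntegral.integral_of_le hle]
    refine intervalIntegral.integral_eq_sub_of_hasDerivAt (fun x hx => ?_) ?_
    · refine hFderiv x ?_
      rw [Set.uIcc_of_le hle] at hx
      have : (0:ℝ) < ((n : ℝ) + 1)⁻¹ := by positivity
      exact lt_of_lt_of_le this hx.1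
    · rw [intervalIntegrable_iff_integrableOn_Ioc_of_le hle]
      exact hFd_int.mono_set (hsub n)
  have htend2 : Filter.Tendsto
      (fun n : ℕ => F ((n : ℝ) + 1) - F (((n : ℝ) + 1)⁻¹)) Filter.atTop (nhds (LT - L0)) := by
    refine Filter.Tendsto.sub ?_ ?_
    · exact hlim_top.comp (Filter.tendsto_atTop_add_const_right _ 1 tendsto_natCast_atTop_atTop)
    · refine hlim0.comp ?_
      refine tendsto_nhdsWithin_of_tendsto_nhds_of_eventually_within _ ?_ ?_
      · exact Filter.Tendsto.inv_tendsto_atTop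
          (Filter.tendsto_atTop_add_const_right _ 1 tendsto_natCast_atTop_atTop)
      · filter_upwards with n
        have : (0:ℝ) < ((n : ℝ) + 1)⁻¹ := by positivity
        exact this
  have hint0 : (∫ x in Set.Ioi (0:ℝ), Fd x) = 0 := by
    have heq := tendsto_nhds_unique (Filter.Tendsto.congr hin htend1) htend2
    rw [heq, hLT, hL0, sub_zero]
  have hsplit : (∫ x in Set.Ioi (0:ℝ), Fd x)
      = c • mellin f c + mellin (fun r : ℝ => (r : ℂ) * f' r) c := by
    have hint1 : Integrable (fun x : ℝ => c • ((x:ℂ) ^ (c - 1) • f x))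
        (volume.restrict (Set.Ioi 0)) := by
      simpa only [smul_eq_mul] using hmc_f.const_mul c
    rw [setIntegral_congr_fun measurableSet_Ioi hFd_eq,
      integral_add hint1 hmc_g, integral_smul]
    rfl
  rw [hsplit] at hint0
  simp only [smul_eq_mul] at hint0
  linear_combination hint0

/-- Analogue on the strip `0 < Re c < a` with weight `r^a`: if `f`, `f·r^{a}`, `r f'` and
`(r f')·r^{a}` belong to `L²((0,∞), dr/r)`, then the Mellin transform of `f` is holomorphic
on the strip and `mellin (r ↦ r f'(r)) c = -c · mellin f c` there. -/
theorem stmt_8 (a : ℝ) (ha : 0 < a) (f f' : ℝ → ℂ)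
    (hdiff : ∀ r ∈ Set.Ioi (0 : ℝ), HasDerivAt f (f' r) r)
    (h1 : IntegrableOn (fun r => ‖f r‖ ^ 2 / r) (Set.Ioi 0))
    (h2 : IntegrableOn (fun r => ‖f r‖ ^ 2 * r ^ (2 * a - 1)) (Set.Ioi 0))
    (h3 : IntegrableOn (fun (r : ℝ) => ‖(r : ℂ) * f' r‖ ^ 2 / r) (Set.Ioi 0))
    (h4 : IntegrableOn (fun (r : ℝ) => ‖(r : ℂ) * f' r‖ ^ 2 * r ^ (2 * a - 1)) (Set.Ioi 0)) :
    DifferentiableOn ℂ (mellin f) {z : ℂ | 0 < z.re ∧ z.re < a} ∧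
      ∀ c : ℂ, 0 < c.re → c.re < a →
        MellinConvergent f c ∧ MellinConvergent (fun r => (r : ℂ) * f' r) c ∧
          mellin (fun r => (r : ℂ) * f' r) c = -c * mellin f c := by
  have hf_cont : ContinuousOn f (Set.Ioi 0) := fun r hr =>
    (hdiff r hr).continuousAt.continuousWithinAt
  have hf_aesm : AEStronglyMeasurable f (volume.restrict (Set.Ioi 0)) :=
    hf_cont.aestronglyMeasurable measurableSet_Ioi
  have hg_aesm : AEStronglyMeasurable (fun r : ℝ => (r : ℂ) * f' r)
      (volume.restrict (Set.Ioi 0)) := by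
    have hm : AEStronglyMeasurable (fun r : ℝ => (r : ℂ) * deriv f r)
        (volume.restrict (Set.Ioi 0)) :=
      (Complex.measurable_ofReal.mul (measurable_deriv f)).aestronglyMeasurable
    refine hm.congr ?_
    filter_upwards [ae_restrict_mem measurableSet_Ioi] with r hr
    rw [(hdiff r hr).deriv]
  exact ⟨keyDiffOn hf_aesm h1 h2, fun c hc1 hc2 =>
    ⟨keyConv hf_aesm h1 h2 hc1 hc2, keyConv hg_aesm h3 h4 hc1 hc2,
      keyIBP hdiff hf_aesm h1 h2 (keyConv hf_aesm h1 h2 hc1 hc2)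
        (keyConv hg_aesm h3 h4 hc1 hc2) hc1 hc2⟩⟩
end

section
/- Let β ∈ ℝ and ε > 0, and let f : (0,∞) → ℂ be measurable with ∫₀^∞ |f(r)|² r^{2(β+ε)} dr/r < ∞ and ∫₀^∞ |f(r)|² r^{2(β-ε)} dr/r < ∞. Then for every c ∈ ℂ with Re c = β, the Mellin integral ∫₀^∞ f(r) r^c dr/r converges absolutely and |mellin f c| ≤ (2ε)^{-1/2} ( ‖f·r^{β-ε}‖ + ‖f·r^{β+ε}‖ ), where ‖f·r^σ‖ = (∫₀^∞ |f(r)|² r^{2σ} dr/r)^{1/2}. -/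
open MeasureTheory

open scoped ENNReal

lemma aux_holder {s : Set ℝ} (hs : MeasurableSet s) (hs0 : s ⊆ Set.Ioi 0)
    {f : ℝ → ℂ} (hf : Measurable f) (σ τ : ℝ)
    (hfi : IntegrableOn (fun r => ‖f r‖ ^ 2 * r ^ (2 * σ - 1)) s)
    (hwi : IntegrableOn (fun r => r ^ (2 * τ - 1)) s) :
    IntegrableOn (fun r => ‖f r‖ * r ^ (σ + τ - 1)) s ∧
      ∫ r in s, ‖f r‖ * r ^ (σ + τ - 1) ≤
        (∫ r in s, ‖f r‖ ^ 2 * r ^ (2 * σ - 1)) ^ (1 / 2 : ℝ) *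
          (∫ r in s, r ^ (2 * τ - 1)) ^ (1 / 2 : ℝ) := by
  set g : ℝ → ℝ := fun r => ‖f r‖ * r ^ (σ - 1 / 2) with hg
  set w : ℝ → ℝ := fun r => r ^ (τ - 1 / 2) with hw
  have hmem : ∀ᵐ r ∂(volume.restrict s), r ∈ s := ae_restrict_mem hs
  have hgw : ∀ᵐ r ∂(volume.restrict s), g r * w r = ‖f r‖ * r ^ (σ + τ - 1) := by
    filter_upwards [hmem] with r hr
    have h0 : (0 : ℝ) < r := hs0 hr
    rw [hg, hw, mul_assoc, ← Real.rpow_add h0,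
      show σ - 1 / 2 + (τ - 1 / 2) = σ + τ - 1 by ring]
  have hg2 : (fun r => ‖f r‖ ^ 2 * r ^ (2 * σ - 1)) =ᵐ[volume.restrict s]
      (fun r => g r ^ (2 : ℕ)) := by
    filter_upwards [hmem] with r hr
    have h0 : (0 : ℝ) < r := hs0 hr
    rw [hg, mul_pow, ← Real.rpow_natCast (r ^ (σ - 1/2)) 2, ← Real.rpow_mul h0.le,
      show (σ - 1/2) * (2:ℕ) = 2 * σ - 1 by push_cast; ring]
  have hw2 : (fun r : ℝ => r ^ (2 * τ - 1)) =ᵐ[volume.restrict s]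
      (fun r => w r ^ (2 : ℕ)) := by
    filter_upwards [hmem] with r hr
    have h0 : (0 : ℝ) < r := hs0 hr
    rw [hw, ← Real.rpow_natCast (r ^ (τ - 1/2)) 2, ← Real.rpow_mul h0.le,
      show (τ - 1/2) * (2:ℕ) = 2 * τ - 1 by push_cast; ring]
  have hgm : AEStronglyMeasurable g (volume.restrict s) :=
    (hf.norm.mul (measurable_id.pow measurable_const)).aestronglyMeasurable
  have hwm : AEStronglyMeasurable w (volume.restrict s) :=
    (measurable_id.pow measurable_const).aestronglyMeasurable
  have hgL2 : MemLp g 2 (volume.restrict s) :=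
    (memLp_two_iff_integrable_sq hgm).2 (hfi.congr hg2)
  have hwL2 : MemLp w 2 (volume.restrict s) :=
    (memLp_two_iff_integrable_sq hwm).2 (hwi.congr hw2)
  have hint : IntegrableOn (fun r => g r * w r) s := by
    have hpqr : (1 : ℝ≥0∞) / 1 = 1 / 2 + 1 / 2 := by
      rw [div_one, ENNReal.add_halves]
    have := (memLp_one_iff_integrable).1 (hgL2.smul (r := 1) hwL2 (hpqr := ⟨by simpa [one_div] using hpqr.symm⟩))
    exact (by simpa [Pi.smul_apply, smul_eq_mul, mul_comm] using this : Integrable (g * w) (volume.restrict s))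
  constructor
  · exact hint.congr hgw
  · have hgnn : 0 ≤ᵐ[volume.restrict s] g := by
      filter_upwards [hmem] with r hr
      have h0 : (0 : ℝ) < r := hs0 hr
      positivity
    have hwnn : 0 ≤ᵐ[volume.restrict s] w := by
      filter_upwards [hmem] with r hr
      have h0 : (0 : ℝ) < r := hs0 hr
      positivity
    have hpq : Real.HolderConjugate 2 2 := Real.HolderConjugate.two_two
    have h2 : ENNReal.ofReal (2 : ℝ) = 2 := by norm_num
    have key := integral_mul_le_Lp_mul_Lq_of_nonneg hpq hgnn hwnn (h2 ▸ hgL2) (h2 ▸ hwL2)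
    calc ∫ r in s, ‖f r‖ * r ^ (σ + τ - 1) = ∫ r in s, g r * w r :=
          (integral_congr_ae hgw).symm
      _ ≤ (∫ r in s, g r ^ (2:ℝ)) ^ (1/2 : ℝ) * (∫ r in s, w r ^ (2:ℝ)) ^ (1/2 : ℝ) := key
      _ = (∫ r in s, ‖f r‖ ^ 2 * r ^ (2 * σ - 1)) ^ (1/2 : ℝ) *
          (∫ r in s, r ^ (2 * τ - 1)) ^ (1/2 : ℝ) := by
          congr 1
          · congr 1
            refine integral_congr_ae ?_
            filter_upwards [hg2] with r h
            rw [h, ← Real.rpow_natCast (g r) 2]; norm_num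
          · congr 1
            refine integral_congr_ae ?_
            filter_upwards [hw2] with r h
            rw [h, ← Real.rpow_natCast (w r) 2]; norm_num

/-- Pointwise bound for the Mellin transform on the vertical line `Re c = β` in terms of
nearby weighted `L²(dr/r)` norms:
`|mellin f c| ≤ (2ε)^{-1/2} (‖f·r^{β-ε}‖ + ‖f·r^{β+ε}‖)`. -/
theorem stmt_9 (β ε : ℝ) (hε : 0 < ε) (f : ℝ → ℂ) (hf : Measurable f)
    (h1 : IntegrableOn (fun r => ‖f r‖ ^ 2 * r ^ (2 * (β + ε) - 1)) (Set.Ioi 0))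
    (h2 : IntegrableOn (fun r => ‖f r‖ ^ 2 * r ^ (2 * (β - ε) - 1)) (Set.Ioi 0)) :
    ∀ c : ℂ, c.re = β →
      MellinConvergent f c ∧
        ‖mellin f c‖ ≤ (2 * ε) ^ (-(1 / 2 : ℝ)) *
          (Real.sqrt (∫ r in Set.Ioi (0 : ℝ), ‖f r‖ ^ 2 * r ^ (2 * (β - ε) - 1)) +
            Real.sqrt (∫ r in Set.Ioi (0 : ℝ), ‖f r‖ ^ 2 * r ^ (2 * (β + ε) - 1))) := by
  intro c hc
  have h2ε : (0 : ℝ) < 2 * ε := by linarith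
  -- weights on the two pieces
  have hw1i : IntegrableOn (fun r : ℝ => r ^ (2 * ε - 1)) (Set.Ioc 0 1) := by
    rw [← intervalIntegrable_iff_integrableOn_Ioc_of_le zero_le_one]
    exact intervalIntegral.intervalIntegrable_rpow' (by linarith)
  have hw1v : ∫ r in Set.Ioc (0 : ℝ) 1, r ^ (2 * ε - 1) = 1 / (2 * ε) := by
    rw [← intervalIntegral.integral_of_le zero_le_one,
      integral_rpow (Or.inl (by linarith))]
    rw [show 2 * ε - 1 + 1 = 2 * ε by ring, Real.one_rpow, Real.zero_rpow h2ε.ne']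
    norm_num
  have hw2i : IntegrableOn (fun r : ℝ => r ^ (2 * -ε - 1)) (Set.Ioi 1) := by
    exact integrableOn_Ioi_rpow_of_lt (by linarith) zero_lt_one
  have hw2v : ∫ r in Set.Ioi (1 : ℝ), r ^ (2 * -ε - 1) = 1 / (2 * ε) := by
    rw [integral_Ioi_rpow_of_lt (by linarith) zero_lt_one]
    rw [show 2 * -ε - 1 + 1 = -(2 * ε) by ring, Real.one_rpow]
    field_simp
  -- Hölder on each piece
  have hp1 := aux_holder measurableSet_Ioc Set.Ioc_subset_Ioi_self hf (β - ε) ε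
    (h2.mono_set Set.Ioc_subset_Ioi_self) hw1i
  have hp2 := aux_holder measurableSet_Ioi (Set.Ioi_subset_Ioi zero_le_one) hf (β + ε) (-ε)
    (h1.mono_set (Set.Ioi_subset_Ioi zero_le_one)) hw2i
  rw [show β - ε + ε - 1 = β - 1 by ring] at hp1
  rw [show β + ε + -ε - 1 = β - 1 by ring] at hp2
  -- integrability of the Mellin integrand
  have hGint : IntegrableOn (fun r : ℝ => ‖f r‖ * r ^ (β - 1)) (Set.Ioi 0) := by
    rw [← Set.Ioc_union_Ioi_eq_Ioi (zero_le_one' ℝ)]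
    exact hp1.1.union hp2.1
  have hconv : MellinConvergent f c := by
    rw [MellinConvergent, mellin_convergent_iff_norm Set.Subset.rfl measurableSet_Ioi
      hf.aestronglyMeasurable.restrict]
    rw [hc]
    exact hGint.congr_fun (fun r _ => by ring) measurableSet_Ioi
  refine ⟨hconv, ?_⟩
  -- bound the norm of the Mellin transform
  have hnorm : ‖mellin f c‖ ≤ ∫ r in Set.Ioi (0 : ℝ), ‖f r‖ * r ^ (β - 1) := by
    refine (norm_integral_le_integral_norm _).trans (le_of_eq ?_)
    refine setIntegral_congr_fun measurableSet_Ioi fun r hr => ?_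
    rw [norm_smul, Complex.norm_cpow_eq_rpow_re_of_pos hr,
      Complex.sub_re, Complex.one_re, hc, mul_comm]
  have hsplit : ∫ r in Set.Ioi (0 : ℝ), ‖f r‖ * r ^ (β - 1) =
      (∫ r in Set.Ioc (0 : ℝ) 1, ‖f r‖ * r ^ (β - 1)) +
        ∫ r in Set.Ioi (1 : ℝ), ‖f r‖ * r ^ (β - 1) := by
    rw [← setIntegral_union (Set.Ioc_disjoint_Ioi le_rfl) measurableSet_Ioi hp1.1 hp2.1,
      Set.Ioc_union_Ioi_eq_Ioi (zero_le_one' ℝ)]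
  -- compare partial integrals to the full ones
  have hA : ∫ r in Set.Ioc (0 : ℝ) 1, ‖f r‖ ^ 2 * r ^ (2 * (β - ε) - 1) ≤
      ∫ r in Set.Ioi (0 : ℝ), ‖f r‖ ^ 2 * r ^ (2 * (β - ε) - 1) := by
    refine setIntegral_mono_set h2 ?_ (HasSubset.Subset.eventuallyLE Set.Ioc_subset_Ioi_self)
    filter_upwards [ae_restrict_mem measurableSet_Ioi] with r (hr : (0:ℝ) < r)
    positivity
  have hB : ∫ r in Set.Ioi (1 : ℝ), ‖f r‖ ^ 2 * r ^ (2 * (β + ε) - 1) ≤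
      ∫ r in Set.Ioi (0 : ℝ), ‖f r‖ ^ 2 * r ^ (2 * (β + ε) - 1) := by
    refine setIntegral_mono_set h1 ?_
      (HasSubset.Subset.eventuallyLE (Set.Ioi_subset_Ioi zero_le_one))
    filter_upwards [ae_restrict_mem measurableSet_Ioi] with r (hr : (0:ℝ) < r)
    positivity
  have hk : ((1 : ℝ) / (2 * ε)) ^ (1 / 2 : ℝ) = (2 * ε) ^ (-(1 / 2 : ℝ)) := by
    rw [one_div, Real.inv_rpow h2ε.le, ← Real.rpow_neg h2ε.le]
  have hAnn : 0 ≤ ∫ r in Set.Ioc (0 : ℝ) 1, ‖f r‖ ^ 2 * r ^ (2 * (β - ε) - 1) := by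
    refine setIntegral_nonneg measurableSet_Ioc fun r hr => ?_
    have : (0:ℝ) < r := hr.1
    positivity
  have hBnn : 0 ≤ ∫ r in Set.Ioi (1 : ℝ), ‖f r‖ ^ 2 * r ^ (2 * (β + ε) - 1) := by
    refine setIntegral_nonneg measurableSet_Ioi fun r hr => ?_
    have : (0:ℝ) < r := lt_trans zero_lt_one hr
    positivity
  have e1 : (∫ r in Set.Ioc (0 : ℝ) 1, ‖f r‖ * r ^ (β - 1)) ≤
      (2 * ε) ^ (-(1 / 2 : ℝ)) *
        Real.sqrt (∫ r in Set.Ioi (0 : ℝ), ‖f r‖ ^ 2 * r ^ (2 * (β - ε) - 1)) := by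
    refine hp1.2.trans ?_
    rw [hw1v, hk, mul_comm]
    refine mul_le_mul_of_nonneg_left ?_ (Real.rpow_nonneg h2ε.le _)
    rw [Real.sqrt_eq_rpow]
    exact Real.rpow_le_rpow hAnn hA (by norm_num)
  have e2 : (∫ r in Set.Ioi (1 : ℝ), ‖f r‖ * r ^ (β - 1)) ≤
      (2 * ε) ^ (-(1 / 2 : ℝ)) *
        Real.sqrt (∫ r in Set.Ioi (0 : ℝ), ‖f r‖ ^ 2 * r ^ (2 * (β + ε) - 1)) := by
    refine hp2.2.trans ?_
    rw [hw2v, hk, mul_comm]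
    refine mul_le_mul_of_nonneg_left ?_ (Real.rpow_nonneg h2ε.le _)
    rw [Real.sqrt_eq_rpow]
    exact Real.rpow_le_rpow hBnn hB (by norm_num)
  calc ‖mellin f c‖ ≤ ∫ r in Set.Ioi (0 : ℝ), ‖f r‖ * r ^ (β - 1) := hnorm
    _ = _ + _ := hsplit
    _ ≤ _ := add_le_add e1 e2
    _ = _ := by ring
end

section
/- Let m > 0 and ε > 0. Let f : (0,∞) → ℂ be differentiable with ∫₀^∞ |f(r)|² dr/r < ∞ and ∫₀^∞ |f(r)|² r^{-2m} dr/r < ∞, and set g(r) = m f(r) - r f'(r). Assume ∫₀^∞ |g(r)|² dr/r < ∞ and ∫₀^∞ |g(r)|² r^{-2(m+ε)} dr/r < ∞. Then the integral ∫₀^∞ g(r) r^{-m} dr/r converges absolutely and equals 0. -/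
open MeasureTheory Set Filter Topology

private lemma rpow_sq_aux {r : ℝ} (hr : 0 < r) (A : ℝ) : (r ^ A) ^ 2 = r ^ (2 * A) := by
  rw [← Real.rpow_natCast (r ^ A) 2, ← Real.rpow_mul hr.le]
  norm_num [mul_comm]

private lemma amgm_aux (a b : ℝ) : a * b ≤ (a ^ 2 + b ^ 2) / 2 := by
  nlinarith [sq_nonneg (a - b)]

/-- Vanishing of the obstruction: if the twisted cohomological equation
`-r f'(r) + m f(r) = g(r)` has a solution `f` with `f` and `f·r^{-m}` in `L²((0,∞), dr/r)`,
and `g`, `g·r^{-(m+ε)}` are in `L²((0,∞), dr/r)`, then `mellin g (-m)` converges absolutely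
and equals `0`. -/
theorem stmt_10 (m ε : ℝ) (hm : 0 < m) (hε : 0 < ε) (f f' : ℝ → ℂ)
    (hdiff : ∀ r ∈ Set.Ioi (0 : ℝ), HasDerivAt f (f' r) r)
    (hf1 : IntegrableOn (fun r => ‖f r‖ ^ 2 / r) (Set.Ioi 0))
    (hf2 : IntegrableOn (fun r => ‖f r‖ ^ 2 * r ^ (-2 * m - 1)) (Set.Ioi 0))
    (g : ℝ → ℂ) (hg : g = fun r => (m : ℂ) * f r - (r : ℂ) * f' r)
    (hg1 : IntegrableOn (fun r => ‖g r‖ ^ 2 / r) (Set.Ioi 0))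
    (hg2 : IntegrableOn (fun r => ‖g r‖ ^ 2 * r ^ (-2 * (m + ε) - 1)) (Set.Ioi 0)) :
    MellinConvergent g (-(m : ℂ)) ∧ mellin g (-(m : ℂ)) = 0 := by
  set F : ℝ → ℂ := fun r => ((r ^ (-m) : ℝ) : ℂ) * f r with hFdef
  set F' : ℝ → ℂ := fun r => -(((r ^ (-m - 1) : ℝ) : ℂ) * g r) with hF'def
  -- derivative computation
  have hF : ∀ r ∈ Ioi (0 : ℝ), HasDerivAt F (F' r) r := by
    intro r hr
    have hr' : (0 : ℝ) < r := hr
    have h1 : HasDerivAt (fun y : ℝ => y ^ (-m)) (-m * r ^ (-m - 1)) r :=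
      Real.hasDerivAt_rpow_const (Or.inl hr'.ne')
    have h3 := (h1.ofReal_comp).mul (hdiff r hr)
    have hkey : ((r ^ (-m - 1) : ℝ) : ℂ) * r = ((r ^ (-m) : ℝ) : ℂ) := by
      rw [← Complex.ofReal_mul, ← Real.rpow_add_one hr'.ne']
      norm_num
    have : F' r = ((-m * r ^ (-m - 1) : ℝ) : ℂ) * f r + ((r ^ (-m) : ℝ) : ℂ) * f' r := by
      rw [hF'def]
      simp only [hg]
      rw [← hkey]
      push_cast
      ring
    rw [this]
    exact h3
  -- measurability
  have hfc : ContinuousOn f (Ioi 0) := fun r hr => (hdiff r hr).continuousAt.continuousWithinAt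
  have hfm : AEStronglyMeasurable f (volume.restrict (Ioi 0)) :=
    hfc.aestronglyMeasurable measurableSet_Ioi
  have hgm : AEStronglyMeasurable g (volume.restrict (Ioi 0)) := by
    have h1 : AEStronglyMeasurable (fun r : ℝ => (m : ℂ) * f r - (r : ℂ) * deriv f r)
        (volume.restrict (Ioi 0)) :=
      (aestronglyMeasurable_const.mul hfm).sub
        ((Complex.continuous_ofReal.aestronglyMeasurable.restrict).mul
          ((stronglyMeasurable_deriv f).aestronglyMeasurable.restrict))
    apply h1.congr
    rw [Filter.EventuallyEq, ae_restrict_iff' measurableSet_Ioi]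
    filter_upwards with r hr
    rw [hg]
    simp only
    rw [(hdiff r hr).deriv]
  have hrpm : ∀ p : ℝ, AEStronglyMeasurable (fun r : ℝ => ((r ^ p : ℝ) : ℂ))
      (volume.restrict (Ioi 0)) := fun p =>
    (Complex.continuous_ofReal.comp_continuousOn
      (continuousOn_id.rpow_const fun x hx => Or.inl (ne_of_gt hx))).aestronglyMeasurable
      measurableSet_Ioi
  have hF'm : AEStronglyMeasurable F' (volume.restrict (Ioi 0)) := ((hrpm (-m - 1)).mul hgm).neg
  -- norm identity
  have hnormF' : ∀ r : ℝ, 0 < r → ‖F' r‖ = ‖g r‖ * r ^ (-m - 1) := by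
    intro r hr
    simp only [hF'def]
    rw [norm_neg, norm_mul, Complex.norm_real, Real.norm_eq_abs,
      abs_of_pos (Real.rpow_pos_of_pos hr _)]
    ring
  have hnormF : ∀ r : ℝ, 0 < r → ‖f r‖ = ‖F r‖ * r ^ m := by
    intro r hr
    have h1 : ‖F r‖ = r ^ (-m) * ‖f r‖ := by
      simp only [hFdef]
      rw [norm_mul, Complex.norm_real, Real.norm_eq_abs,
        abs_of_pos (Real.rpow_pos_of_pos hr _)]
    have h2 : r ^ (-m) * r ^ m = 1 := by
      rw [← Real.rpow_add hr]; simp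
    calc ‖f r‖ = (r ^ (-m) * r ^ m) * ‖f r‖ := by rw [h2, one_mul]
      _ = (r ^ (-m) * ‖f r‖) * r ^ m := by ring
      _ = ‖F r‖ * r ^ m := by rw [h1]
  -- integrability of F' near 0
  have hI1 : IntegrableOn F' (Ioc 0 1) := by
    have hb : IntegrableOn (fun r : ℝ => r ^ (2 * ε - 1)) (Ioc 0 1) := by
      rw [integrableOn_Ioc_iff_integrableOn_Ioo]
      exact (intervalIntegral.integrableOn_Ioo_rpow_iff zero_lt_one).mpr (by linarith)
    have hmaj : IntegrableOn
        (fun r : ℝ => (‖g r‖ ^ 2 * r ^ (-2 * (m + ε) - 1) + r ^ (2 * ε - 1)) / 2) (Ioc 0 1) :=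
      ((hg2.mono_set Ioc_subset_Ioi_self).add hb).div_const 2
    refine Integrable.mono' hmaj
      (hF'm.mono_measure (Measure.restrict_mono Ioc_subset_Ioi_self le_rfl)) ?_
    rw [ae_restrict_iff' measurableSet_Ioc]
    filter_upwards with r hr
    have hr' : (0 : ℝ) < r := hr.1
    rw [hnormF' r hr']
    have hab : ‖g r‖ * r ^ (-m - 1) =
        (‖g r‖ * r ^ (-(m + ε) - 1 / 2)) * r ^ (ε - 1 / 2) := by
      rw [mul_assoc, ← Real.rpow_add hr']
      congr 2
      ring
    have ha2 : (‖g r‖ * r ^ (-(m + ε) - 1 / 2)) ^ 2 = ‖g r‖ ^ 2 * r ^ (-2 * (m + ε) - 1) := by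
      rw [mul_pow, rpow_sq_aux hr']
      congr 2
      ring
    have hb2 : (r ^ (ε - 1 / 2)) ^ 2 = r ^ (2 * ε - 1) := by
      rw [rpow_sq_aux hr']
      congr 1
      ring
    rw [hab]
    calc (‖g r‖ * r ^ (-(m + ε) - 1 / 2)) * r ^ (ε - 1 / 2)
        ≤ ((‖g r‖ * r ^ (-(m + ε) - 1 / 2)) ^ 2 + (r ^ (ε - 1 / 2)) ^ 2) / 2 := amgm_aux _ _
      _ = (‖g r‖ ^ 2 * r ^ (-2 * (m + ε) - 1) + r ^ (2 * ε - 1)) / 2 := by rw [ha2, hb2]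
  -- integrability of F' near ∞
  have hI2 : IntegrableOn F' (Ioi 1) := by
    have hb : IntegrableOn (fun r : ℝ => r ^ (-2 * m - 1)) (Ioi 1) :=
      integrableOn_Ioi_rpow_of_lt (by linarith) zero_lt_one
    have hmaj : IntegrableOn
        (fun r : ℝ => (‖g r‖ ^ 2 / r + r ^ (-2 * m - 1)) / 2) (Ioi 1) :=
      ((hg1.mono_set (Ioi_subset_Ioi zero_le_one)).add hb).div_const 2
    refine Integrable.mono' hmaj
      (hF'm.mono_measure (Measure.restrict_mono (Ioi_subset_Ioi zero_le_one) le_rfl)) ?_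
    rw [ae_restrict_iff' measurableSet_Ioi]
    filter_upwards with r hr
    have hr' : (0 : ℝ) < r := lt_trans zero_lt_one hr
    rw [hnormF' r hr']
    have hab : ‖g r‖ * r ^ (-m - 1) = (‖g r‖ * r ^ (-(1 : ℝ) / 2)) * r ^ (-m - 1 / 2) := by
      rw [mul_assoc, ← Real.rpow_add hr']
      congr 2
      ring
    have ha2 : (‖g r‖ * r ^ (-(1 : ℝ) / 2)) ^ 2 = ‖g r‖ ^ 2 / r := by
      rw [mul_pow, rpow_sq_aux hr']
      rw [show 2 * (-(1 : ℝ) / 2) = -1 by ring, Real.rpow_neg_one]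
      rw [div_eq_mul_inv]
    have hb2 : (r ^ (-m - 1 / 2)) ^ 2 = r ^ (-2 * m - 1) := by
      rw [rpow_sq_aux hr']
      congr 1
      ring
    rw [hab]
    calc (‖g r‖ * r ^ (-(1 : ℝ) / 2)) * r ^ (-m - 1 / 2)
        ≤ ((‖g r‖ * r ^ (-(1 : ℝ) / 2)) ^ 2 + (r ^ (-m - 1 / 2)) ^ 2) / 2 := amgm_aux _ _
      _ = (‖g r‖ ^ 2 / r + r ^ (-2 * m - 1)) / 2 := by rw [ha2, hb2]
  have hint : IntegrableOn F' (Ioi 0) := by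
    rw [← Ioc_union_Ioi_eq_Ioi (zero_le_one (α := ℝ))]
    exact hI1.union hI2
  -- limit at infinity
  have htop : Tendsto F atTop (𝓝 (limUnder atTop F)) :=
    tendsto_limUnder_of_hasDerivAt_of_integrableOn_Ioi
      (fun x (hx : x ∈ Ioi 1) => hF x (show x ∈ Ioi 0 from lt_trans zero_lt_one (mem_Ioi.mp hx))) hI2
  set Linf := limUnder atTop F with hLinfdef
  have hLinf0 : Linf = 0 := by
    by_contra hne
    have hnp : 0 < ‖Linf‖ := norm_pos_iff.mpr hne
    have hev : ∀ᶠ r in atTop, ‖Linf‖ / 2 ≤ ‖F r‖ :=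
      htop.norm.eventually (eventually_ge_nhds (by linarith))
    obtain ⟨R, hR⟩ := Filter.eventually_atTop.mp (hev.and (eventually_ge_atTop 1))
    set R0 := max R 1 with hR0def
    have hR0 : (0 : ℝ) < R0 := lt_of_lt_of_le zero_lt_one (le_max_right _ _)
    have hc : 0 < (‖Linf‖ / 2) ^ 2 * R0 ^ (2 * m) := by positivity
    have hInt : IntegrableOn
        (fun r : ℝ => (‖Linf‖ / 2) ^ 2 * R0 ^ (2 * m) * r⁻¹) (Ioi R0) := by
      refine Integrable.mono' (hf1.mono_set (Ioi_subset_Ioi hR0.le)) ?_ ?_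
      · exact (continuousOn_const.mul
          (continuousOn_id.inv₀ fun x hx => ne_of_gt (hR0.trans hx))).aestronglyMeasurable
          measurableSet_Ioi
      · rw [ae_restrict_iff' measurableSet_Ioi]
        filter_upwards with r hr
        have hrpos : (0 : ℝ) < r := hR0.trans hr
        have hbd : ‖Linf‖ / 2 ≤ ‖F r‖ := (hR r (le_trans (le_max_left _ _) hr.le)).1
        have hfr2 : ‖f r‖ ^ 2 / r = ‖F r‖ ^ 2 * r ^ (2 * m) * r⁻¹ := by
          rw [hnormF r hrpos, mul_pow, rpow_sq_aux hrpos, div_eq_mul_inv]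
        rw [Real.norm_eq_abs, abs_of_nonneg (by positivity), hfr2]
        gcongr
        exact le_of_lt hr
    have hIntInv : IntegrableOn (fun r : ℝ => r ^ (-1 : ℝ)) (Ioi R0) := by
      have h2 : IntegrableOn
          (fun x : ℝ => ((‖Linf‖ / 2) ^ 2 * R0 ^ (2 * m))⁻¹ *
            ((‖Linf‖ / 2) ^ 2 * R0 ^ (2 * m) * x⁻¹)) (Ioi R0) :=
        hInt.const_mul ((‖Linf‖ / 2) ^ 2 * R0 ^ (2 * m))⁻¹
      refine h2.congr_fun (fun r hr => ?_) measurableSet_Ioi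
      dsimp only
      rw [Real.rpow_neg_one, ← mul_assoc, inv_mul_cancel₀ hc.ne', one_mul]
    rw [integrableOn_Ioi_rpow_iff hR0] at hIntInv
    linarith
  -- limit at zero
  have hcov : AECover (volume.restrict (Ioc (0 : ℝ) 1)) (𝓝[>] (0 : ℝ)) fun t => Ioi t := by
    constructor
    · rw [ae_restrict_iff' measurableSet_Ioc]
      filter_upwards with x hx
      have hmem : Iio x ∈ 𝓝[>] (0 : ℝ) := nhdsWithin_le_nhds (Iio_mem_nhds hx.1)
      exact Filter.eventually_of_mem hmem fun t ht => ht
    · exact fun t => measurableSet_Ioi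
  have htint : Tendsto (fun t => ∫ x in Ioc t 1, F' x) (𝓝[>] (0 : ℝ))
      (𝓝 (∫ x in Ioc (0 : ℝ) 1, F' x)) := by
    have h := hcov.integral_tendsto_of_countably_generated hI1
    apply h.congr'
    filter_upwards [Ioo_mem_nhdsGT_of_mem (left_mem_Ico.mpr zero_lt_one)] with t ht
    rw [Measure.restrict_restrict measurableSet_Ioi]
    have hset : Ioi t ∩ Ioc (0:ℝ) 1 = Ioc t 1 := by
      ext x
      simp only [mem_inter_iff, mem_Ioi, mem_Ioc]
      constructor
      · rintro ⟨h1, _, h3⟩; exact ⟨h1, h3⟩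
      · rintro ⟨h1, h2⟩; exact ⟨h1, ht.1.trans h1, h2⟩
    rw [hset]
  have hFt : ∀ᶠ t in 𝓝[>] (0 : ℝ), F t = F 1 - ∫ x in Ioc t 1, F' x := by
    filter_upwards [Ioo_mem_nhdsGT_of_mem (left_mem_Ico.mpr zero_lt_one)] with t ht
    have hti : IntervalIntegrable F' volume t 1 := by
      rw [intervalIntegrable_iff_integrableOn_Ioc_of_le ht.2.le]
      exact hI1.mono_set (Ioc_subset_Ioc_left ht.1.le)
    have heq := intervalIntegral.integral_eq_sub_of_hasDerivAt
      (f := F) (f' := F') (a := t) (b := 1)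
      (fun x hx => hF x (by
        rw [uIcc_of_le ht.2.le] at hx
        exact lt_of_lt_of_le ht.1 hx.1)) hti
    rw [intervalIntegral.integral_of_le ht.2.le] at heq
    rw [heq]
    ring
  have h0 : Tendsto F (𝓝[>] (0 : ℝ)) (𝓝 (F 1 - ∫ x in Ioc (0 : ℝ) 1, F' x)) :=
    (tendsto_const_nhds.sub htint).congr' (hFt.mono fun t ht => ht.symm)
  set L0 := F 1 - ∫ x in Ioc (0 : ℝ) 1, F' x with hL0def
  have hL00 : L0 = 0 := by
    by_contra hne
    have hnp : 0 < ‖L0‖ := norm_pos_iff.mpr hne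
    have hev : ∀ᶠ r in 𝓝[>] (0 : ℝ), ‖L0‖ / 2 ≤ ‖F r‖ :=
      h0.norm.eventually (eventually_ge_nhds (by linarith))
    obtain ⟨δ, hδpos, hδ⟩ := (nhdsGT_basis (0 : ℝ)).eventually_iff.mp hev
    set δ' := min δ 1 with hδ'def
    have hδ'pos : (0 : ℝ) < δ' := lt_min hδpos zero_lt_one
    have hInt : IntegrableOn (fun r : ℝ => (‖L0‖ / 2) ^ 2 * r ^ (-1 : ℝ)) (Ioo 0 δ') := by
      refine Integrable.mono' (hf2.mono_set fun x hx => hx.1) ?_ ?_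
      · exact (continuousOn_const.mul
          (continuousOn_id.rpow_const fun x hx => Or.inl (ne_of_gt hx.1))).aestronglyMeasurable
          measurableSet_Ioo
      · rw [ae_restrict_iff' measurableSet_Ioo]
        filter_upwards with r hr
        have hrpos : (0 : ℝ) < r := hr.1
        have hbd : ‖L0‖ / 2 ≤ ‖F r‖ := hδ ⟨hrpos, lt_of_lt_of_le hr.2 (min_le_left _ _)⟩
        have hfr2 : ‖f r‖ ^ 2 * r ^ (-2 * m - 1) = ‖F r‖ ^ 2 * r ^ (-1 : ℝ) := by
          rw [hnormF r hrpos, mul_pow, rpow_sq_aux hrpos, mul_assoc, ← Real.rpow_add hrpos]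
          congr 2
          ring
        rw [Real.norm_eq_abs, abs_of_nonneg (by positivity), hfr2]
        gcongr
    have hIntInv : IntegrableOn (fun r : ℝ => r ^ (-1 : ℝ)) (Ioo 0 δ') := by
      have hcpos : (0 : ℝ) < (‖L0‖ / 2) ^ 2 := by positivity
      have h2 : IntegrableOn
          (fun x : ℝ => ((‖L0‖ / 2) ^ 2)⁻¹ * ((‖L0‖ / 2) ^ 2 * x ^ (-1 : ℝ))) (Ioo 0 δ') :=
        hInt.const_mul ((‖L0‖ / 2) ^ 2)⁻¹
      refine h2.congr_fun (fun r hr => ?_) measurableSet_Ioo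
      dsimp only
      rw [← mul_assoc, inv_mul_cancel₀ hcpos.ne', one_mul]
    rw [intervalIntegral.integrableOn_Ioo_rpow_iff hδ'pos] at hIntInv
    linarith
  -- FTC on the two pieces
  have htop_eq : ∫ x in Ioi (1 : ℝ), F' x = Linf - F 1 :=
    integral_Ioi_of_hasDerivAt_of_tendsto'
      (fun x (hx : x ∈ Ici 1) => hF x (show x ∈ Ioi 0 from lt_of_lt_of_le zero_lt_one (mem_Ici.mp hx))) hI2 htop
  have hIoc_eq : ∫ x in Ioc (0 : ℝ) 1, F' x = F 1 - L0 := by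
    rw [hL0def]; ring
  have htotal : ∫ x in Ioi (0 : ℝ), F' x = 0 := by
    rw [← Ioc_union_Ioi_eq_Ioi (zero_le_one (α := ℝ)),
      setIntegral_union (Ioc_disjoint_Ioi le_rfl) measurableSet_Ioi hI1 hI2,
      htop_eq, hIoc_eq, hL00, hLinf0]
    ring
  -- relate to Mellin integrand
  have heq : ∀ t ∈ Ioi (0 : ℝ), (t : ℂ) ^ (-(m : ℂ) - 1) • g t = -F' t := by
    intro t ht
    have ht' : (0 : ℝ) < t := ht
    have h1 : ((-m - 1 : ℝ) : ℂ) = -(m : ℂ) - 1 := by push_cast; ring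
    rw [hF'def]
    simp only [neg_neg, smul_eq_mul]
    rw [← h1, ← Complex.ofReal_cpow ht'.le]
  have hnegint : IntegrableOn (fun t : ℝ => -F' t) (Ioi 0) := hint.neg
  have hmc : IntegrableOn (fun t : ℝ => (t : ℂ) ^ (-(m : ℂ) - 1) • g t) (Ioi 0) :=
    hnegint.congr_fun (fun t ht => (heq t ht).symm) measurableSet_Ioi
  constructor
  · exact hmc
  · unfold mellin
    rw [setIntegral_congr_fun measurableSet_Ioi heq, integral_neg, htotal, neg_zero]
end

section
/- Let m ∈ ℝ and let g : (0,∞) → ℂ be differentiable. Assume: (i) for every compact set K ⊂ (0,∞) there exist integrable functions h₁, h₂ : (0,∞) → ℝ with |e^{-ms} g(e^s r)| ≤ h₁(s) and |e^{-ms} e^s r g'(e^s r)| ≤ h₂(s) for all r ∈ K and s > 0; and (ii) for every r > 0, e^{-ms} g(e^s r) → 0 as s → ∞. Then the function f(r) := ∫₀^∞ e^{-ms} g(e^s r) ds is differentiable on (0,∞) and satisfies -r f'(r) + m f(r) = g(r) for all r > 0. -/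
open MeasureTheory

/-- Under local domination and decay hypotheses, the function
`f(r) = ∫₀^∞ e^{-ms} g(e^s r) ds` is differentiable on `(0,∞)` and solves the twisted
cohomological equation `-r f'(r) + m f(r) = g(r)` pointwise. -/
theorem stmt_14 (m : ℝ) (g g' : ℝ → ℂ)
    (hdiff : ∀ r ∈ Set.Ioi (0 : ℝ), HasDerivAt g (g' r) r)
    (hdom : ∀ K : Set ℝ, K ⊆ Set.Ioi (0 : ℝ) → IsCompact K →
      ∃ h₁ h₂ : ℝ → ℝ, IntegrableOn h₁ (Set.Ioi 0) ∧ IntegrableOn h₂ (Set.Ioi 0) ∧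
        ∀ r ∈ K, ∀ s ∈ Set.Ioi (0 : ℝ),
          ‖Real.exp (-m * s) • g (Real.exp s * r)‖ ≤ h₁ s ∧
          ‖Real.exp (-m * s) • ((Real.exp s * r) • g' (Real.exp s * r))‖ ≤ h₂ s)
    (hlim : ∀ r ∈ Set.Ioi (0 : ℝ),
      Filter.Tendsto (fun s => Real.exp (-m * s) • g (Real.exp s * r))
        Filter.atTop (nhds 0)) :
    ∀ r ∈ Set.Ioi (0 : ℝ), ∃ d : ℂ,
      HasDerivAt (fun x => ∫ s in Set.Ioi (0 : ℝ), Real.exp (-m * s) • g (Real.exp s * x)) d r ∧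
      -(r : ℂ) * d + (m : ℂ) * (∫ s in Set.Ioi (0 : ℝ), Real.exp (-m * s) • g (Real.exp s * r))
        = g r := by
  intro r hr
  have hr0 : (0 : ℝ) < r := hr
  -- continuity of the integrand in s, for each x > 0
  have Fcont : ∀ x : ℝ, 0 < x →
      Continuous (fun s => Real.exp (-m * s) • g (Real.exp s * x)) := by
    intro x hx
    have hec : Continuous (fun s : ℝ => Real.exp s * x) :=
      Real.continuous_exp.mul continuous_const
    have hmc : Continuous (fun s : ℝ => Real.exp (-m * s)) :=
      Real.continuous_exp.comp (continuous_const.mul continuous_id)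
    have hgc : Continuous (fun s : ℝ => g (Real.exp s * x)) := by
      rw [continuous_iff_continuousAt]
      intro s
      have h1 : ContinuousAt (fun s : ℝ => Real.exp s * x) s := hec.continuousAt
      have h2 : ContinuousAt g (Real.exp s * x) :=
        (hdiff _ (by positivity : (0:ℝ) < Real.exp s * x)).continuousAt
      exact ContinuousAt.comp (f := fun s : ℝ => Real.exp s * x) (x := s) h2 h1
    exact hmc.smul hgc
  -- derivative in x
  have FderivX : ∀ x : ℝ, 0 < x → ∀ s : ℝ,
      HasDerivAt (fun x => Real.exp (-m * s) • g (Real.exp s * x))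
        ((Real.exp (-m * s) * Real.exp s) • g' (Real.exp s * x)) x := by
    intro x hx s
    have h1 : HasDerivAt (fun x : ℝ => Real.exp s * x) (Real.exp s) x := by
      simpa using (hasDerivAt_id x).const_mul (Real.exp s)
    have h2 := (hdiff _ (by positivity : (0:ℝ) < Real.exp s * x)).scomp x h1
    have h3 := h2.const_smul (Real.exp (-m * s))
    rw [smul_smul] at h3
    exact h3
  -- measurability of the x-derivative in s, for each x > 0
  have F'meas : ∀ x : ℝ, 0 < x →
      AEStronglyMeasurable (fun s => (Real.exp (-m * s) * Real.exp s) • g' (Real.exp s * x))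
        (volume.restrict (Set.Ioi 0)) := by
    intro x hx
    have heq : (fun s => (Real.exp (-m * s) * Real.exp s) • g' (Real.exp s * x))
        = fun s => (Real.exp (-m * s) * Real.exp s) • deriv g (Real.exp s * x) := by
      funext s
      rw [(hdiff _ (by positivity : (0:ℝ) < Real.exp s * x)).deriv]
    rw [heq]
    have hmc : Continuous (fun s : ℝ => Real.exp (-m * s) * Real.exp s) :=
      (Real.continuous_exp.comp (continuous_const.mul continuous_id)).mul Real.continuous_exp
    have hec : Continuous (fun s : ℝ => Real.exp s * x) :=
      Real.continuous_exp.mul continuous_const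
    have hdm : Measurable (fun s : ℝ => deriv g (Real.exp s * x)) :=
      (measurable_deriv g).comp hec.measurable
    exact (hmc.measurable.smul hdm).aestronglyMeasurable
  -- domination on the compact neighborhood K
  set K : Set ℝ := Set.Icc (r/2) (r + r/2) with hKdef
  have hKsub : K ⊆ Set.Ioi 0 := fun x hx => lt_of_lt_of_le (by positivity) hx.1
  obtain ⟨h₁, h₂, hi1, hi2, hb⟩ := hdom K hKsub isCompact_Icc
  have hrK : r ∈ K := ⟨by linarith, by linarith⟩
  -- integrability of the integrand at r
  have hF_int : Integrable (fun s => Real.exp (-m * s) • g (Real.exp s * r))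
      (volume.restrict (Set.Ioi 0)) := by
    refine hi1.mono' (Fcont r hr0).aestronglyMeasurable ?_
    refine (ae_restrict_iff' measurableSet_Ioi).2 (Filter.Eventually.of_forall fun s hs => ?_)
    exact (hb r hrK s hs).1
  -- differentiation under the integral
  have key := hasDerivAt_integral_of_dominated_loc_of_deriv_le
    (F := fun x s => Real.exp (-m * s) • g (Real.exp s * x))
    (F' := fun x s => (Real.exp (-m * s) * Real.exp s) • g' (Real.exp s * x))
    (x₀ := r) (s := Metric.ball r (r/2)) (bound := fun s => (2/r) * h₂ s)
    (μ := volume.restrict (Set.Ioi 0)) (Metric.ball_mem_nhds r (by positivity))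
    (by
      filter_upwards [eventually_gt_nhds hr0] with x hx
      exact (Fcont x hx).aestronglyMeasurable)
    hF_int (F'meas r hr0)
    (by
      refine (ae_restrict_iff' measurableSet_Ioi).2 (Filter.Eventually.of_forall fun s hs => ?_)
      intro x hx
      have hx1 : |x - r| < r/2 := by simpa [Metric.mem_ball, Real.dist_eq] using hx
      have hx2 : r/2 < x := by cases abs_sub_lt_iff.1 hx1; linarith
      have hx0 : (0:ℝ) < x := by linarith
      have hxK : x ∈ K := ⟨le_of_lt hx2, by cases abs_sub_lt_iff.1 hx1; linarith⟩
      have hkey := (hb x hxK s hs).2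
      have e1 : ‖Real.exp (-m*s) • ((Real.exp s * x) • g' (Real.exp s * x))‖
          = x * ‖(Real.exp (-m*s) * Real.exp s) • g' (Real.exp s * x)‖ := by
        simp only [norm_smul, Real.norm_eq_abs, abs_mul, Real.abs_exp, abs_of_pos hx0]
        ring
      rw [e1] at hkey
      show ‖(Real.exp (-m * s) * Real.exp s) • g' (Real.exp s * x)‖ ≤ (2/r) * h₂ s
      rw [show (2/r) * h₂ s = (2 * h₂ s)/r by ring, le_div_iff₀ hr0]
      nlinarith [norm_nonneg ((Real.exp (-m*s) * Real.exp s) • g' (Real.exp s * x)),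
        mul_nonneg (by linarith : (0:ℝ) ≤ 2*x - r)
          (norm_nonneg ((Real.exp (-m*s) * Real.exp s) • g' (Real.exp s * x)))])
    (hi2.const_mul (2/r))
    (by
      refine (ae_restrict_iff' measurableSet_Ioi).2 (Filter.Eventually.of_forall fun s hs => ?_)
      intro x hx
      have hx1 : |x - r| < r/2 := by simpa [Metric.mem_ball, Real.dist_eq] using hx
      have hx0 : (0:ℝ) < x := by cases abs_sub_lt_iff.1 hx1; linarith
      exact FderivX x hx0 s)
  obtain ⟨hF'int, hder⟩ := key
  set d : ℂ := ∫ s in Set.Ioi (0:ℝ), (Real.exp (-m * s) * Real.exp s) • g' (Real.exp s * r)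
    with hd
  refine ⟨d, hder, ?_⟩
  -- derivative in s of the integrand at x = r
  have φderiv : ∀ s : ℝ,
      HasDerivAt (fun s => Real.exp (-m * s) • g (Real.exp s * r))
        (Real.exp (-m * s) • ((Real.exp s * r) • g' (Real.exp s * r))
          + (-m * Real.exp (-m * s)) • g (Real.exp s * r)) s := by
    intro s
    have hc : HasDerivAt (fun s : ℝ => Real.exp (-m * s)) (-m * Real.exp (-m * s)) s := by
      have := (Real.hasDerivAt_exp (-m*s)).comp s ((hasDerivAt_id s).const_mul (-m))
      simpa only [Function.comp_def, mul_one, mul_comm] using this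
    have h1 : HasDerivAt (fun s : ℝ => Real.exp s * r) (Real.exp s * r) s := by
      simpa using (Real.hasDerivAt_exp s).mul_const r
    have h2 := (hdiff _ (by positivity : (0:ℝ) < Real.exp s * r)).scomp s h1
    have := hc.smul h2
    exact this
  -- rewrite the first term of the s-derivative
  have term1_eq : (fun s => Real.exp (-m * s) • ((Real.exp s * r) • g' (Real.exp s * r)))
      = fun s => r • ((Real.exp (-m * s) * Real.exp s) • g' (Real.exp s * r)) := by
    funext s
    rw [smul_smul, smul_smul]
    ring_nf
  have int1 : Integrable
      (fun s => Real.exp (-m * s) • ((Real.exp s * r) • g' (Real.exp s * r)))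
      (volume.restrict (Set.Ioi 0)) := by
    rw [term1_eq]; exact hF'int.smul r
  have int2 : Integrable
      (fun s => (-m * Real.exp (-m * s)) • g (Real.exp s * r))
      (volume.restrict (Set.Ioi 0)) := by
    have : (fun s => (-m * Real.exp (-m * s)) • g (Real.exp s * r))
        = fun s => (-m) • (Real.exp (-m * s) • g (Real.exp s * r)) := by
      funext s; rw [smul_smul]
    rw [this]; exact hF_int.smul (-m)
  -- FTC on (0, ∞)
  have ftc := integral_Ioi_of_hasDerivAt_of_tendsto
    (f := fun s => Real.exp (-m * s) • g (Real.exp s * r))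
    (f' := fun s => Real.exp (-m * s) • ((Real.exp s * r) • g' (Real.exp s * r))
      + (-m * Real.exp (-m * s)) • g (Real.exp s * r))
    (a := 0) (m := 0)
    ((Fcont r hr0).continuousWithinAt) (fun s _ => φderiv s) (int1.add int2) (hlim r hr)
  rw [integral_add int1 int2] at ftc
  simp only [mul_zero, neg_zero, Real.exp_zero, one_mul, one_smul, zero_sub] at ftc
  have e2 : ∫ s in Set.Ioi (0:ℝ),
      Real.exp (-m * s) • ((Real.exp s * r) • g' (Real.exp s * r)) = r • d := by
    rw [term1_eq, integral_smul]
  have e3 : ∫ s in Set.Ioi (0:ℝ), (-m * Real.exp (-m * s)) • g (Real.exp s * r)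
      = (-m) • ∫ s in Set.Ioi (0:ℝ), Real.exp (-m * s) • g (Real.exp s * r) := by
    rw [← integral_smul]
    congr 1; funext s; rw [smul_smul]
  rw [e2, e3, Complex.real_smul, Complex.real_smul] at ftc
  push_cast at ftc
  linear_combination -ftc
end

section
/- Let m > 0 and a > m. Let g : (0,∞) → ℂ be measurable with ∫₀^∞ |g(r)|² dr/r < ∞, ∫₀^∞ |g(r)|² r^{-2a} dr/r < ∞, ∫₀^∞ |g(u)| u^{-m} du/u < ∞, and suppose the obstruction vanishes: ∫₀^∞ g(u) u^{-m} du/u = 0. Define f(r) = ∫₀^∞ e^{-ms} g(e^s r) ds (absolutely convergent for every r > 0). Then for every real b with -a < b ≤ 0 and b ≠ -m, the function f·r^b lies in L²((0,∞), dr/r) and ‖f·r^b‖ ≤ |m+b|^{-1} ‖g·r^b‖, where ‖h·r^σ‖ = (∫₀^∞ |h(r)|² r^{2σ} dr/r)^{1/2}. -/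
open MeasureTheory
open Set
open scoped ENNReal

section helpers
variable {E : Type*} [NormedAddCommGroup E] [NormedSpace ℝ E]

lemma exp_hasderiv : ∀ x ∈ (univ : Set ℝ), HasDerivWithinAt Real.exp (Real.exp x) univ x :=
  fun x _ => (Real.hasDerivAt_exp x).hasDerivWithinAt

lemma exp_img : Real.exp '' univ = Ioi (0:ℝ) := by
  rw [Set.image_univ, Real.range_exp]

lemma integral_Ioi_exp (φ : ℝ → E) :
    ∫ r in Ioi (0:ℝ), φ r = ∫ t, Real.exp t • φ (Real.exp t) := by
  rw [← exp_img, integral_image_eq_integral_abs_deriv_smul MeasurableSet.univ exp_hasderiv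
    Real.exp_injective.injOn φ, Measure.restrict_univ]
  simp [abs_of_pos (Real.exp_pos _)]

lemma integrableOn_Ioi_exp (φ : ℝ → E) :
    IntegrableOn φ (Ioi (0:ℝ)) ↔ Integrable (fun t => Real.exp t • φ (Real.exp t)) := by
  rw [← exp_img, integrableOn_image_iff_integrableOn_abs_deriv_smul MeasurableSet.univ
    exp_hasderiv Real.exp_injective.injOn φ]
  constructor
  · intro h; rw [← integrableOn_univ]
    exact h.congr_fun (fun x _ => by simp [abs_of_pos (Real.exp_pos _)]) MeasurableSet.univ
  · intro h
    refine (integrableOn_univ.2 h).congr_fun (fun x _ => by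
      simp [abs_of_pos (Real.exp_pos _)]) MeasurableSet.univ

end helpers

lemma ofReal_int_le {μ : Measure ℝ} (h : ℝ → ℝ) (hn : ∀ x, 0 ≤ h x) :
    ENNReal.ofReal (∫ x, h x ∂μ) ≤ ∫⁻ x, ENNReal.ofReal (h x) ∂μ := by
  by_cases hi : Integrable h μ
  · exact (ofReal_integral_eq_lintegral_ofReal hi (Filter.Eventually.of_forall hn)).le
  · rw [integral_undef hi]; simp

lemma core_est (G : ℝ → ℂ) (hG : Measurable G) (m b : ℝ)
    (S : Set ℝ) (hS : MeasurableSet S) (κ : ℝ≥0∞)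
    (hκ : ∫⁻ s in S, ENNReal.ofReal (Real.exp (-(m + b) * s)) = κ)
    (F : ℝ → ℂ)
    (hF : ∀ t, ‖F t‖ ≤ ∫ s in S, Real.exp (-m * s) * ‖G (s + t)‖) :
    ∫⁻ t, ENNReal.ofReal (‖F t‖ ^ 2 * Real.exp (2 * b * t)) ≤
      κ ^ 2 * ∫⁻ u, ENNReal.ofReal (‖G u‖ ^ 2 * Real.exp (2 * b * u)) := by
  set c := m + b with hc
  set Φ : ℝ → ℝ≥0∞ := fun u => ENNReal.ofReal (‖G u‖ ^ 2 * Real.exp (2 * b * u)) with hΦ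
  have hΦm : Measurable Φ :=
    ((hG.norm.pow_const 2).mul
      (Real.measurable_exp.comp (measurable_const.mul measurable_id))).ennreal_ofReal
  set k : ℝ → ℝ≥0∞ := S.indicator (fun s => ENNReal.ofReal (Real.exp (-c * s))) with hk
  have hkm : Measurable k :=
    (Real.measurable_exp.comp (measurable_const.mul measurable_id)).ennreal_ofReal.indicator hS
  have hκ' : ∫⁻ s, k s = κ := by rw [hk, lintegral_indicator hS]; exact hκ
  set J : ℝ → ℝ≥0∞ := fun t => ∫⁻ s, k s * Φ (s + t) with hJ
  have hJm : Measurable J := by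
    apply Measurable.lintegral_prod_right (f := fun t s => k s * Φ (s + t))
    exact (hkm.comp measurable_snd).mul (hΦm.comp (measurable_snd.add measurable_fst))
  -- pointwise bound
  have point : ∀ t, ENNReal.ofReal (‖F t‖ ^ 2 * Real.exp (2 * b * t)) ≤ κ * J t := by
    intro t
    have h1 : ENNReal.ofReal (‖F t‖ * Real.exp (b * t)) ≤
        ∫⁻ s in S, ENNReal.ofReal (Real.exp (-m * s) * ‖G (s + t)‖ * Real.exp (b * t)) := by
      calc ENNReal.ofReal (‖F t‖ * Real.exp (b * t))
          ≤ ENNReal.ofReal ((∫ s in S, Real.exp (-m * s) * ‖G (s + t)‖) * Real.exp (b * t)) :=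
            ENNReal.ofReal_le_ofReal
              (mul_le_mul_of_nonneg_right (hF t) (Real.exp_pos _).le)
        _ = ENNReal.ofReal (∫ s in S, Real.exp (-m * s) * ‖G (s + t)‖ * Real.exp (b * t)) := by
            rw [← integral_mul_const]
        _ ≤ _ := ofReal_int_le _ (fun s => by positivity)
    -- split integrand into product for Cauchy-Schwarz
    have split : ∀ s : ℝ, ENNReal.ofReal (Real.exp (-m * s) * ‖G (s + t)‖ * Real.exp (b * t)) =
        ENNReal.ofReal (Real.exp (-c * s / 2)) *
          ENNReal.ofReal (Real.exp (-c * s / 2) * (‖G (s + t)‖ * Real.exp (b * (s + t)))) := by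
      intro s
      rw [← ENNReal.ofReal_mul (Real.exp_pos _).le]
      congr 1
      have e1 : Real.exp (-c * s / 2) * (Real.exp (-c * s / 2) *
          (‖G (s + t)‖ * Real.exp (b * (s + t)))) =
          (Real.exp (-c * s / 2) * Real.exp (-c * s / 2) * Real.exp (b * (s + t))) *
            ‖G (s + t)‖ := by ring
      rw [e1, ← Real.exp_add, ← Real.exp_add,
        show -c * s / 2 + -c * s / 2 + b * (s + t) = -m * s + b * t by rw [hc]; ring,
        Real.exp_add]
      ring
    -- Cauchy-Schwarz
    have hpq : Real.HolderConjugate 2 2 := Real.holderConjugate_iff.mpr ⟨one_lt_two, by norm_num⟩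
    have cs := ENNReal.lintegral_mul_le_Lp_mul_Lq (volume.restrict S) hpq
      (f := fun s => ENNReal.ofReal (Real.exp (-c * s / 2)))
      (g := fun s => ENNReal.ofReal (Real.exp (-c * s / 2) * (‖G (s + t)‖ * Real.exp (b * (s + t)))))
      ((Real.measurable_exp.comp ((measurable_const.mul measurable_id).div_const 2)).ennreal_ofReal.aemeasurable)
      (((Real.measurable_exp.comp ((measurable_const.mul measurable_id).div_const 2)).mul
        ((hG.norm.comp (measurable_id.add_const t)).mul
          (Real.measurable_exp.comp (measurable_const.mul (measurable_id.add_const t))))).ennreal_ofReal.aemeasurable)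
    have pow_f : ∀ s : ℝ, ENNReal.ofReal (Real.exp (-c * s / 2)) ^ (2 : ℝ) =
        ENNReal.ofReal (Real.exp (-c * s)) := by
      intro s
      rw [ENNReal.ofReal_rpow_of_nonneg (Real.exp_pos _).le (by norm_num),
        ← Real.exp_mul]
      norm_num
    have pow_g : ∀ s : ℝ, ENNReal.ofReal
        (Real.exp (-c * s / 2) * (‖G (s + t)‖ * Real.exp (b * (s + t)))) ^ (2 : ℝ) =
        ENNReal.ofReal (Real.exp (-c * s)) * Φ (s + t) := by
      intro s
      rw [ENNReal.ofReal_rpow_of_nonneg (by positivity) (by norm_num), hΦ,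
        ← ENNReal.ofReal_mul (Real.exp_pos _).le]
      congr 1
      rw [show (2 : ℝ) = ((2 : ℕ) : ℝ) by norm_num, Real.rpow_natCast]
      have : Real.exp (-c * s / 2) ^ 2 = Real.exp (-c * s) := by
        rw [sq, ← Real.exp_add]; ring_nf
      have e2 : Real.exp (b * (s + t)) ^ 2 = Real.exp (2 * b * (s + t)) := by
        rw [sq, ← Real.exp_add]; ring_nf
      calc (Real.exp (-c * s / 2) * (‖G (s + t)‖ * Real.exp (b * (s + t)))) ^ 2
          = Real.exp (-c * s / 2) ^ 2 * (‖G (s + t)‖ ^ 2 * Real.exp (b * (s + t)) ^ 2) := by ring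
        _ = Real.exp (-c * s) * (‖G (s + t)‖ ^ 2 * Real.exp (2 * b * (s + t))) := by rw [this, e2]
    simp only [Pi.mul_apply] at cs
    simp only [split] at h1
    have eJ : (∫⁻ s in S, ENNReal.ofReal (Real.exp (-c * s)) * Φ (s + t)) = J t := by
      rw [hJ, ← lintegral_indicator hS]
      congr 1
      funext s
      rw [Set.indicator_mul_left]
    simp_rw [pow_f, pow_g] at cs
    rw [hκ, eJ] at cs
    have h2 : ENNReal.ofReal (‖F t‖ * Real.exp (b * t)) ≤
        κ ^ ((1:ℝ)/2) * (J t) ^ ((1:ℝ)/2) := h1.trans cs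
    have sq_le : ENNReal.ofReal (‖F t‖ * Real.exp (b * t)) ^ 2 ≤
        (κ ^ ((1:ℝ)/2) * (J t) ^ ((1:ℝ)/2)) ^ 2 := pow_le_pow_left' h2 2
    calc ENNReal.ofReal (‖F t‖ ^ 2 * Real.exp (2 * b * t))
        = ENNReal.ofReal ((‖F t‖ * Real.exp (b * t)) ^ 2) := by
          congr 1
          have : Real.exp (b * t) ^ 2 = Real.exp (2 * b * t) := by
            rw [sq, ← Real.exp_add]; ring_nf
          rw [mul_pow, this]
      _ = ENNReal.ofReal (‖F t‖ * Real.exp (b * t)) ^ 2 :=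
          ENNReal.ofReal_pow (by positivity) 2
      _ ≤ (κ ^ ((1:ℝ)/2) * (J t) ^ ((1:ℝ)/2)) ^ 2 := sq_le
      _ = κ * J t := by
          rw [mul_pow, ← ENNReal.rpow_natCast (κ ^ ((1:ℝ)/2)) 2,
            ← ENNReal.rpow_natCast ((J t) ^ ((1:ℝ)/2)) 2,
            ← ENNReal.rpow_mul, ← ENNReal.rpow_mul]
          norm_num
  -- integrate and swap
  calc ∫⁻ t, ENNReal.ofReal (‖F t‖ ^ 2 * Real.exp (2 * b * t))
      ≤ ∫⁻ t, κ * J t := lintegral_mono point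
    _ = κ * ∫⁻ t, J t := lintegral_const_mul κ hJm
    _ = κ * ∫⁻ s, ∫⁻ t, k s * Φ (s + t) := by
        rw [hJ]
        congr 1
        exact lintegral_lintegral_swap
          (((hkm.comp measurable_snd).mul
            (hΦm.comp (measurable_snd.add measurable_fst))).aemeasurable)
    _ = κ * ∫⁻ s, k s * ∫⁻ u, Φ u := by
        congr 1
        apply lintegral_congr
        intro s
        have hmeas : Measurable fun t : ℝ => Φ (s + t) :=
          hΦm.comp (measurable_const.add measurable_id)
        rw [lintegral_const_mul _ hmeas]
        congr 1
        simp_rw [add_comm s]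
        exact lintegral_add_right_eq_self Φ s
    _ = κ ^ 2 * ∫⁻ u, Φ u := by
        rw [lintegral_mul_const _ hkm, hκ', sq]
        ring

lemma kappa_Ioi {d : ℝ} (hd : 0 < d) :
    ∫⁻ s in Ioi (0:ℝ), ENNReal.ofReal (Real.exp (-d * s)) = ENNReal.ofReal d⁻¹ := by
  have hi : IntegrableOn (fun x => Real.exp (-d * x)) (Ioi (0:ℝ)) :=
    exp_neg_integrableOn_Ioi 0 hd
  rw [← ofReal_integral_eq_lintegral_ofReal hi
    (Filter.Eventually.of_forall fun x => (Real.exp_pos _).le)]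
  congr 1
  have := integral_comp_mul_left_Ioi (fun x => Real.exp (-x)) 0 hd
  simp only [mul_zero] at this
  calc ∫ x in Ioi (0:ℝ), Real.exp (-d * x) = ∫ x in Ioi (0:ℝ), Real.exp (-(d * x)) := by
        simp_rw [neg_mul]
    _ = d⁻¹ • ∫ x in Ioi (0:ℝ), Real.exp (-x) := this
    _ = d⁻¹ := by rw [integral_exp_neg_Ioi_zero]; simp

lemma kappa_Iio {d : ℝ} (hd : d < 0) :
    ∫⁻ s in Iio (0:ℝ), ENNReal.ofReal (Real.exp (-d * s)) = ENNReal.ofReal (-d)⁻¹ := by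
  have hmp := Measure.measurePreserving_neg (volume : Measure ℝ)
  have key := setLIntegral_map (μ := (volume : Measure ℝ)) (s := Iio (0:ℝ)) measurableSet_Iio
    (f := fun s => ENNReal.ofReal (Real.exp (-d * s))) (g := Neg.neg)
    ((Real.measurable_exp.comp (measurable_const.mul measurable_id)).ennreal_ofReal)
    measurable_neg
  rw [hmp.map_eq] at key
  have hpre : (Neg.neg ⁻¹' Iio (0:ℝ)) = Ioi (0:ℝ) := by ext x; simp
  rw [hpre] at key
  rw [key]
  have : ∀ x : ℝ, Real.exp (-d * (-x)) = Real.exp (-(-d) * x) := fun x => by ring_nf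
  simp_rw [this]
  exact kappa_Ioi (by linarith)


/-- Realization of Theorem 5.4(2): if `g`, `g·r^{-a}` are in `L²((0,∞), dr/r)` with
`a > m > 0`, `∫₀^∞ |g| u^{-m} du/u < ∞`, and the obstruction `∫₀^∞ g(u) u^{-m} du/u`
vanishes, then the forward solution `f(r) = ∫₀^∞ e^{-ms} g(e^s r) ds` (absolutely
convergent for every `r > 0`) satisfies `‖f·r^b‖ ≤ |m+b|⁻¹ ‖g·r^b‖` for every weight
`b ∈ (-a, 0]` with `b ≠ -m`. -/
theorem stmt_15 (m a : ℝ) (hm : 0 < m) (ham : m < a) (g : ℝ → ℂ) (hg : Measurable g)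
    (h1 : IntegrableOn (fun r => ‖g r‖ ^ 2 / r) (Set.Ioi 0))
    (h2 : IntegrableOn (fun r => ‖g r‖ ^ 2 * r ^ (-2 * a - 1)) (Set.Ioi 0))
    (h3 : IntegrableOn (fun u => ‖g u‖ * u ^ (-m - 1)) (Set.Ioi 0))
    (hobs : (∫ u in Set.Ioi (0 : ℝ), u ^ (-m - 1) • g u) = 0)
    (f : ℝ → ℂ)
    (hf : f = fun r => ∫ s in Set.Ioi (0 : ℝ), Real.exp (-m * s) • g (Real.exp s * r)) :
    (∀ r ∈ Set.Ioi (0 : ℝ),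
        IntegrableOn (fun s => Real.exp (-m * s) • g (Real.exp s * r)) (Set.Ioi 0)) ∧
      ∀ b : ℝ, -a < b → b ≤ 0 → b ≠ -m →
        IntegrableOn (fun r => ‖f r‖ ^ 2 * r ^ (2 * b - 1)) (Set.Ioi 0) ∧
        Real.sqrt (∫ r in Set.Ioi (0 : ℝ), ‖f r‖ ^ 2 * r ^ (2 * b - 1)) ≤
          |m + b|⁻¹ * Real.sqrt (∫ r in Set.Ioi (0 : ℝ), ‖g r‖ ^ 2 * r ^ (2 * b - 1)) := by
  set G : ℝ → ℂ := fun t => g (Real.exp t) with hGdef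
  have hGm : Measurable G := hg.comp Real.measurable_exp
  have hrp : ∀ t y : ℝ, (Real.exp t) ^ (y : ℝ) = Real.exp (t * y) :=
    fun t y => (Real.exp_mul t y).symm
  -- transferred hypotheses
  have H1 : Integrable (fun t => ‖G t‖ ^ 2) := by
    have := (integrableOn_Ioi_exp (fun r => ‖g r‖ ^ 2 / r)).1 h1
    refine this.congr (Filter.Eventually.of_forall fun t => ?_)
    simp only [smul_eq_mul]
    rw [mul_comm, div_mul_cancel₀ _ (Real.exp_ne_zero t)]
  have H2 : Integrable (fun t => ‖G t‖ ^ 2 * Real.exp (-2 * a * t)) := by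
    have := (integrableOn_Ioi_exp (fun r => ‖g r‖ ^ 2 * r ^ (-2 * a - 1))).1 h2
    refine this.congr (Filter.Eventually.of_forall fun t => ?_)
    simp only [smul_eq_mul]
    rw [hrp, show Real.exp t * (‖G t‖ ^ 2 * Real.exp (t * (-2 * a - 1))) =
      ‖G t‖ ^ 2 * (Real.exp t * Real.exp (t * (-2 * a - 1))) from by ring, ← Real.exp_add]
    congr 2
    ring
  have H3 : Integrable (fun u => Real.exp (-m * u) * ‖G u‖) := by
    have := (integrableOn_Ioi_exp (fun u => ‖g u‖ * u ^ (-m - 1))).1 h3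
    refine this.congr (Filter.Eventually.of_forall fun t => ?_)
    simp only [smul_eq_mul]
    rw [hrp, show Real.exp t * (‖G t‖ * Real.exp (t * (-m - 1))) =
      (Real.exp t * Real.exp (t * (-m - 1))) * ‖G t‖ from by ring, ← Real.exp_add]
    congr 2
    ring
  have HO : (∫ u, Real.exp (-m * u) • G u) = 0 := by
    rw [← hobs, integral_Ioi_exp (fun u => u ^ (-m - 1) • g u)]
    apply integral_congr_ae
    filter_upwards with t
    rw [smul_smul, hrp, ← Real.exp_add, show t + t * (-m - 1) = -m * t from by ring]
  -- pointwise integrability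
  have Hint : ∀ t0 : ℝ, Integrable (fun s => Real.exp (-m * s) • G (s + t0)) := by
    intro t0
    have h' : Integrable (fun s => Real.exp (m * t0) *
        (Real.exp (-m * (s + t0)) * ‖G (s + t0)‖)) :=
      (H3.comp_add_right t0).const_mul _
    refine Integrable.mono' h' ?_ (Filter.Eventually.of_forall fun s => ?_)
    · exact ((Real.measurable_exp.comp (measurable_const.mul measurable_id)).smul
        (hGm.comp (measurable_id.add_const t0))).aestronglyMeasurable
    · rw [norm_smul, Real.norm_eq_abs, abs_of_pos (Real.exp_pos _),
        show Real.exp (m * t0) * (Real.exp (-m * (s + t0)) * ‖G (s + t0)‖) =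
          (Real.exp (m * t0) * Real.exp (-m * (s + t0))) * ‖G (s + t0)‖ from by ring,
        ← Real.exp_add, show m * t0 + -m * (s + t0) = -m * s from by ring]
  -- part 1
  have part1 : ∀ r ∈ Set.Ioi (0 : ℝ),
      IntegrableOn (fun s => Real.exp (-m * s) • g (Real.exp s * r)) (Set.Ioi 0) := by
    intro r hr
    have : (fun s => Real.exp (-m * s) • g (Real.exp s * r)) =
        fun s => Real.exp (-m * s) • G (s + Real.log r) := by
      funext s
      rw [hGdef]
      simp only
      rw [Real.exp_add, Real.exp_log hr]
    rw [this]
    exact (Hint _).integrableOn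
  refine ⟨part1, ?_⟩
  -- F on the line
  set F : ℝ → ℂ := fun t => ∫ s in Ioi (0:ℝ), Real.exp (-m * s) • G (s + t) with hFdef
  have hfF : ∀ t, f (Real.exp t) = F t := by
    intro t
    rw [hf, hFdef]
    apply integral_congr_ae
    filter_upwards with s
    rw [hGdef]
    simp only
    rw [← Real.exp_add]
  have hFm : AEStronglyMeasurable F volume := by
    refine StronglyMeasurable.aestronglyMeasurable ?_
    have : StronglyMeasurable (fun p : ℝ × ℝ => Real.exp (-m * p.2) • G (p.2 + p.1)) :=
      ((Real.measurable_exp.comp (measurable_const.mul measurable_snd)).smul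
        (hGm.comp (measurable_snd.add measurable_fst))).stronglyMeasurable
    exact this.integral_prod_right'
  -- part 2
  intro b hba hb0 hbm
  have hc0 : m + b ≠ 0 := fun h => hbm (by linarith)
  -- weighted L² of G
  set Wb : ℝ → ℝ := fun u => ‖G u‖ ^ 2 * Real.exp (2 * b * u) with hWbdef
  have HW : Integrable Wb := by
    refine (H1.add H2).mono' ?_ (Filter.Eventually.of_forall fun u => ?_)
    · exact ((hGm.norm.pow_const 2).mul
        (Real.measurable_exp.comp (measurable_const.mul measurable_id))).aestronglyMeasurable
    · have hb' : Real.exp (2 * b * u) ≤ 1 + Real.exp (-2 * a * u) := by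
        rcases le_or_gt 0 u with h | h
        · have h2b : 2 * b * u ≤ 0 := by nlinarith
          exact (Real.exp_le_one_iff.mpr h2b).trans
            (le_add_of_nonneg_right (Real.exp_pos _).le)
        · have h2b : 2 * b * u ≤ -2 * a * u := by nlinarith
          exact (Real.exp_le_exp.mpr h2b).trans (le_add_of_nonneg_left zero_le_one)
      rw [Real.norm_eq_abs, abs_of_nonneg (by positivity)]
      calc ‖G u‖ ^ 2 * Real.exp (2 * b * u) ≤ ‖G u‖ ^ 2 * (1 + Real.exp (-2 * a * u)) :=
            mul_le_mul_of_nonneg_left hb' (by positivity)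
        _ = ‖G u‖ ^ 2 + ‖G u‖ ^ 2 * Real.exp (-2 * a * u) := by ring
  have hWbnn : ∀ u, 0 ≤ Wb u := fun u => by positivity
  set lΦ : ℝ≥0∞ := ∫⁻ u, ENNReal.ofReal (Wb u) with hlΦdef
  have hlΦ : lΦ = ENNReal.ofReal (∫ u, Wb u) :=
    (ofReal_integral_eq_lintegral_ofReal HW (Filter.Eventually.of_forall hWbnn)).symm
  have hlΦfin : lΦ ≠ ⊤ := by rw [hlΦ]; exact ENNReal.ofReal_ne_top
  -- the main lintegral estimate, by cases on sign of m + b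
  have EST : ∫⁻ t, ENNReal.ofReal (‖F t‖ ^ 2 * Real.exp (2 * b * t)) ≤
      ENNReal.ofReal |m + b|⁻¹ ^ 2 * lΦ := by
    rcases hc0.lt_or_gt with hneg | hpos
    · -- m + b < 0 : use the obstruction, integrate over Iio 0
      have hκ : ∫⁻ s in Iio (0:ℝ), ENNReal.ofReal (Real.exp (-(m + b) * s)) =
          ENNReal.ofReal |m + b|⁻¹ := by
        rw [kappa_Iio hneg, abs_of_neg hneg]
      have hFrev : ∀ t, F t = - ∫ s in Iio (0:ℝ), Real.exp (-m * s) • G (s + t) := by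
        intro t
        have hint := Hint t
        have hzero : (∫ s, Real.exp (-m * s) • G (s + t)) = 0 := by
          have heq : (fun s => Real.exp (-m * s) • G (s + t)) =
              fun s => Real.exp (m * t) • (Real.exp (-m * (s + t)) • G (s + t)) := by
            funext s
            rw [smul_smul, ← Real.exp_add, show m * t + -m * (s + t) = -m * s from by ring]
          rw [heq]
          have : (∫ s, Real.exp (m * t) • (Real.exp (-m * (s + t)) • G (s + t))) =
              Real.exp (m * t) • ∫ s, Real.exp (-m * (s + t)) • G (s + t) := integral_smul _ _
          rw [this, integral_add_right_eq_self (fun u => Real.exp (-m * u) • G u) t, HO,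
            smul_zero]
        have hsplit := intervalIntegral.integral_Iic_add_Ioi (b := (0:ℝ))
          hint.integrableOn hint.integrableOn (μ := volume)
        rw [hzero] at hsplit
        have hIic : (∫ s in Iic (0:ℝ), Real.exp (-m * s) • G (s + t)) =
            ∫ s in Iio (0:ℝ), Real.exp (-m * s) • G (s + t) :=
          setIntegral_congr_set Iio_ae_eq_Iic.symm
        rw [hFdef]
        simp only
        rw [← hIic]
        linear_combination (norm := abel) hsplit
      have hFb : ∀ t, ‖F t‖ ≤ ∫ s in Iio (0:ℝ), Real.exp (-m * s) * ‖G (s + t)‖ := by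
        intro t
        rw [hFrev t, norm_neg]
        refine (norm_integral_le_integral_norm _).trans_eq ?_
        apply integral_congr_ae
        filter_upwards with s
        rw [norm_smul, Real.norm_eq_abs, abs_of_pos (Real.exp_pos _)]
      exact core_est G hGm m b (Iio 0) measurableSet_Iio _ hκ F hFb
    · -- 0 < m + b : direct estimate over Ioi 0
      have hκ : ∫⁻ s in Ioi (0:ℝ), ENNReal.ofReal (Real.exp (-(m + b) * s)) =
          ENNReal.ofReal |m + b|⁻¹ := by
        rw [kappa_Ioi hpos, abs_of_pos hpos]
      have hFb : ∀ t, ‖F t‖ ≤ ∫ s in Ioi (0:ℝ), Real.exp (-m * s) * ‖G (s + t)‖ := by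
        intro t
        rw [hFdef]
        simp only
        refine (norm_integral_le_integral_norm _).trans_eq ?_
        apply integral_congr_ae
        filter_upwards with s
        rw [norm_smul, Real.norm_eq_abs, abs_of_pos (Real.exp_pos _)]
      exact core_est G hGm m b (Ioi 0) measurableSet_Ioi _ hκ F hFb
  -- weighted L² of F is integrable
  set Wf : ℝ → ℝ := fun t => ‖F t‖ ^ 2 * Real.exp (2 * b * t) with hWfdef
  have hWfnn : ∀ t, 0 ≤ Wf t := fun t => by positivity
  have hWfm : AEStronglyMeasurable Wf volume := by
    refine AEMeasurable.aestronglyMeasurable ?_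
    exact ((hFm.norm.aemeasurable.pow_const 2).mul
      (Real.measurable_exp.comp (measurable_const.mul measurable_id)).aemeasurable)
  have HWf : Integrable Wf := by
    refine ⟨hWfm, ?_⟩
    rw [hasFiniteIntegral_iff_ofReal (Filter.Eventually.of_forall hWfnn)]
    exact EST.trans_lt (ENNReal.mul_lt_top
      (ENNReal.pow_ne_top ENNReal.ofReal_ne_top).lt_top hlΦfin.lt_top)
  -- transfer back to (0, ∞)
  have hfeq : ∀ t : ℝ, Real.exp t • (‖f (Real.exp t)‖ ^ 2 * (Real.exp t) ^ (2 * b - 1)) =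
      Wf t := by
    intro t
    rw [smul_eq_mul, hfF t, hrp, hWfdef,
      show Real.exp t * (‖F t‖ ^ 2 * Real.exp (t * (2 * b - 1))) =
        ‖F t‖ ^ 2 * (Real.exp t * Real.exp (t * (2 * b - 1))) from by ring,
      ← Real.exp_add]
    congr 2
    ring
  have hgeq : ∀ t : ℝ, Real.exp t • (‖g (Real.exp t)‖ ^ 2 * (Real.exp t) ^ (2 * b - 1)) =
      Wb t := by
    intro t
    rw [smul_eq_mul, hrp, hWbdef,
      show Real.exp t * (‖g (Real.exp t)‖ ^ 2 * Real.exp (t * (2 * b - 1))) =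
        ‖g (Real.exp t)‖ ^ 2 * (Real.exp t * Real.exp (t * (2 * b - 1))) from by ring,
      ← Real.exp_add]
    rw [hGdef]
    congr 2
    ring
  have hIOn : IntegrableOn (fun r => ‖f r‖ ^ 2 * r ^ (2 * b - 1)) (Set.Ioi 0) := by
    rw [integrableOn_Ioi_exp]
    exact HWf.congr (Filter.Eventually.of_forall fun t => (hfeq t).symm)
  refine ⟨hIOn, ?_⟩
  -- value inequality
  have hXeq : (∫ r in Set.Ioi (0:ℝ), ‖f r‖ ^ 2 * r ^ (2 * b - 1)) = ∫ t, Wf t := by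
    rw [integral_Ioi_exp (fun r => ‖f r‖ ^ 2 * r ^ (2 * b - 1))]
    exact integral_congr_ae (Filter.Eventually.of_forall hfeq)
  have hYeq : (∫ r in Set.Ioi (0:ℝ), ‖g r‖ ^ 2 * r ^ (2 * b - 1)) = ∫ u, Wb u := by
    rw [integral_Ioi_exp (fun r => ‖g r‖ ^ 2 * r ^ (2 * b - 1))]
    exact integral_congr_ae (Filter.Eventually.of_forall hgeq)
  have hXval : (∫ t, Wf t) ≤ |m + b|⁻¹ ^ 2 * ∫ u, Wb u := by
    have h1' : (∫ t, Wf t) =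
        (∫⁻ t, ENNReal.ofReal (Wf t)).toReal :=
      integral_eq_lintegral_of_nonneg_ae (Filter.Eventually.of_forall hWfnn) hWfm
    rw [h1']
    have h2' : (∫⁻ t, ENNReal.ofReal (Wf t)).toReal ≤
        (ENNReal.ofReal |m + b|⁻¹ ^ 2 * lΦ).toReal := by
      refine ENNReal.toReal_mono ?_ EST
      exact ENNReal.mul_ne_top (ENNReal.pow_ne_top ENNReal.ofReal_ne_top) hlΦfin
    refine h2'.trans_eq ?_
    rw [ENNReal.toReal_mul, ENNReal.toReal_pow, ENNReal.toReal_ofReal (by positivity), hlΦ,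
      ENNReal.toReal_ofReal (integral_nonneg hWbnn)]
  have hfin : (∫ r in Set.Ioi (0:ℝ), ‖f r‖ ^ 2 * r ^ (2 * b - 1)) ≤
      |m + b|⁻¹ ^ 2 * ∫ r in Set.Ioi (0:ℝ), ‖g r‖ ^ 2 * r ^ (2 * b - 1) := by
    rw [hXeq, hYeq]; exact hXval
  calc Real.sqrt (∫ r in Set.Ioi (0:ℝ), ‖f r‖ ^ 2 * r ^ (2 * b - 1))
      ≤ Real.sqrt (|m + b|⁻¹ ^ 2 * ∫ r in Set.Ioi (0:ℝ), ‖g r‖ ^ 2 * r ^ (2 * b - 1)) :=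
        Real.sqrt_le_sqrt hfin
    _ = |m + b|⁻¹ * Real.sqrt (∫ r in Set.Ioi (0:ℝ), ‖g r‖ ^ 2 * r ^ (2 * b - 1)) := by
        rw [Real.sqrt_mul (sq_nonneg _), Real.sqrt_sq (by positivity)]
end

section
/- Let m ∈ ℝ and ε > 0. Let φ : ℂ → ℂ be holomorphic on an open set containing the closed disk {z : |z + m| ≤ ε}, with φ(-m) = 0, and set K = sup{|φ(z)| : |z + m| = ε}. Let α be a real number with |α + m| ≤ ε/2 and suppose t ↦ φ(α + it) is measurable with N² := ∫_ℝ |φ(α + it)|² dt < ∞. Then ∫_ℝ |φ(α + it)|² / |α + it + m|² dt ≤ 4 ε^{-2} N² + ε^{-1} K². -/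
open MeasureTheory

/-- Key estimate for vertical-line `L²` bounds near a removable singularity: if `φ` is
holomorphic on a neighborhood of the closed disk of radius `ε` around `-m`, vanishes at
`-m`, is bounded by `K` on the boundary circle, and `t ↦ φ(α + it)` is square-integrable
with `|α + m| ≤ ε/2`, then
`∫_ℝ |φ(α+it)|²/|α+it+m|² dt ≤ 4 ε⁻² ∫_ℝ |φ(α+it)|² dt + ε⁻¹ K²`. -/
theorem stmt_19 (m ε : ℝ) (hε : 0 < ε) (φ : ℂ → ℂ) (U : Set ℂ) (hU : IsOpen U)
    (hball : Metric.closedBall (-(m : ℂ)) ε ⊆ U) (hφ : DifferentiableOn ℂ φ U)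
    (hzero : φ (-(m : ℂ)) = 0) (K : ℝ)
    (hK : ∀ z ∈ Metric.sphere (-(m : ℂ)) ε, ‖φ z‖ ≤ K)
    (α : ℝ) (hα : |α + m| ≤ ε / 2)
    (hmeas : Measurable fun t : ℝ => φ ((α : ℂ) + (t : ℂ) * Complex.I))
    (hN : Integrable fun t : ℝ => ‖φ ((α : ℂ) + (t : ℂ) * Complex.I)‖ ^ 2) :
    ∫⁻ t : ℝ, ENNReal.ofReal
        (‖φ ((α : ℂ) + (t : ℂ) * Complex.I)‖ ^ 2
          / ‖(α : ℂ) + (t : ℂ) * Complex.I + (m : ℂ)‖ ^ 2) ≤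
      ENNReal.ofReal
        (4 * ε⁻¹ ^ 2 * (∫ t : ℝ, ‖φ ((α : ℂ) + (t : ℂ) * Complex.I)‖ ^ 2) + ε⁻¹ * K ^ 2) := by
  set c : ℂ := -(m : ℂ) with hc
  -- `K` is nonnegative
  have hKnn : 0 ≤ K := by
    have hmem : c + ε ∈ Metric.sphere c ε := by
      simp [Metric.mem_sphere, dist_eq_norm, abs_of_pos hε]
    exact (norm_nonneg _).trans (hK _ hmem)
  -- the quotient function
  set ψ : ℂ → ℂ := dslope φ c with hψdef
  have hcU : U ∈ nhds c := hU.mem_nhds (hball (Metric.mem_closedBall_self hε.le))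
  have hψ : DifferentiableOn ℂ ψ U := (Complex.differentiableOn_dslope hcU).mpr hφ
  -- maximum modulus: `‖ψ‖ ≤ K/ε` on the closed ball
  have hψbound : ∀ z ∈ Metric.closedBall c ε, ‖ψ z‖ ≤ K / ε := by
    intro z hz
    have hcl : DiffContOnCl ℂ ψ (Metric.ball c ε) := hψ.diffContOnCl_ball hball
    have hz' : z ∈ closure (Metric.ball c ε) := by
      rwa [closure_ball c hε.ne']
    refine Complex.norm_le_of_forall_mem_frontier_norm_le Metric.isBounded_ball hcl ?_ hz'
    intro w hw
    rw [frontier_ball c hε.ne'] at hw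
    have hwne : w ≠ c := by
      intro h; rw [h] at hw
      simp only [Metric.mem_sphere, dist_self] at hw
      exact hε.ne hw
    have : ψ w = (w - c)⁻¹ * φ w := by
      rw [hψdef, dslope_of_ne _ hwne]
      simp [slope, hzero, vsub_eq_sub]
    rw [this, norm_mul, norm_inv]
    have hwc : ‖w - c‖ = ε := by rwa [← dist_eq_norm, ← Metric.mem_sphere]
    rw [hwc, div_eq_inv_mul]
    exact mul_le_mul_of_nonneg_left (hK w hw) (inv_nonneg.mpr hε.le)
  -- hence `‖φ z‖ ≤ (K/ε) ‖z - c‖` on the closed ball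
  have hφbound : ∀ z ∈ Metric.closedBall c ε, ‖φ z‖ ≤ K / ε * ‖z - c‖ := by
    intro z hz
    have h1 : (z - c) • ψ z = φ z - φ c := sub_smul_dslope φ c z
    rw [hzero, sub_zero] at h1
    calc ‖φ z‖ = ‖z - c‖ * ‖ψ z‖ := by rw [← h1, norm_smul]
    _ ≤ ‖z - c‖ * (K / ε) := mul_le_mul_of_nonneg_left (hψbound z hz) (norm_nonneg _)
    _ = K / ε * ‖z - c‖ := mul_comm _ _
  set z : ℝ → ℂ := fun t => (α : ℂ) + (t : ℂ) * Complex.I with hzdef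
  have hzsub : ∀ t : ℝ, z t - c = ((α + m : ℝ) : ℂ) + (t : ℂ) * Complex.I := by
    intro t; push_cast [hzdef, hc]; ring
  have hzm : ∀ t : ℝ, z t + (m : ℂ) = z t - c := by
    intro t; rw [hc]; ring
  -- lower bound of the distance by `|t|`, upper bound by `|α+m| + |t|`
  have hlow : ∀ t : ℝ, |t| ≤ ‖z t - c‖ := by
    intro t
    rw [hzsub t]
    have := Complex.abs_im_le_norm (((α + m : ℝ) : ℂ) + (t : ℂ) * Complex.I)
    simpa using this
  have hup : ∀ t : ℝ, ‖z t - c‖ ≤ |α + m| + |t| := by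
    intro t
    rw [hzsub t]
    calc ‖((α + m : ℝ) : ℂ) + (t : ℂ) * Complex.I‖
        ≤ ‖((α + m : ℝ) : ℂ)‖ + ‖(t : ℂ) * Complex.I‖ := norm_add_le _ _
    _ = |α + m| + |t| := by simp [← Complex.ofReal_add]
  -- pointwise bound
  have key : ∀ t : ℝ,
      ENNReal.ofReal (‖φ (z t)‖ ^ 2 / ‖z t + (m : ℂ)‖ ^ 2) ≤
        ENNReal.ofReal (4 * ε⁻¹ ^ 2 * ‖φ (z t)‖ ^ 2) +
        (Set.Icc (-(ε / 2)) (ε / 2)).indicator (fun _ => ENNReal.ofReal (ε⁻¹ ^ 2 * K ^ 2)) t := by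
    intro t
    by_cases ht : |t| ≤ ε / 2
    · -- near the singularity
      have htmem : t ∈ Set.Icc (-(ε / 2)) (ε / 2)  := abs_le.mp ht
      rw [Set.indicator_of_mem htmem]
      have hin : z t ∈ Metric.closedBall c ε := by
        rw [Metric.mem_closedBall, dist_eq_norm]
        calc ‖z t - c‖ ≤ |α + m| + |t| := hup t
        _ ≤ ε / 2 + ε / 2 := add_le_add hα ht
        _ = ε := by ring
      have hφb := hφbound _ hin
      have hbound : ‖φ (z t)‖ ^ 2 / ‖z t + (m : ℂ)‖ ^ 2 ≤ ε⁻¹ ^ 2 * K ^ 2 := by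
        rw [hzm t]
        rcases eq_or_lt_of_le (norm_nonneg (z t - c)) with h0 | h0
        · rw [← h0]
          simp only [ne_eq, OfNat.ofNat_ne_zero, not_false_eq_true, zero_pow, div_zero]
          positivity
        · rw [div_le_iff₀ (by positivity)]
          calc ‖φ (z t)‖ ^ 2 ≤ (K / ε * ‖z t - c‖) ^ 2 := by
                apply pow_le_pow_left₀ (norm_nonneg _) hφb
          _ = ε⁻¹ ^ 2 * K ^ 2 * ‖z t - c‖ ^ 2 := by
                field_simp
      calc ENNReal.ofReal (‖φ (z t)‖ ^ 2 / ‖z t + (m : ℂ)‖ ^ 2)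
          ≤ ENNReal.ofReal (ε⁻¹ ^ 2 * K ^ 2) := ENNReal.ofReal_le_ofReal hbound
      _ ≤ _ := le_add_self
    · -- away from the singularity
      push_neg at ht
      have hd : ε / 2 < ‖z t + (m : ℂ)‖ := by
        rw [hzm t]; exact ht.trans_le (hlow t)
      have hbound : ‖φ (z t)‖ ^ 2 / ‖z t + (m : ℂ)‖ ^ 2 ≤ 4 * ε⁻¹ ^ 2 * ‖φ (z t)‖ ^ 2 := by
        have h2 : (ε / 2) ^ 2 ≤ ‖z t + (m : ℂ)‖ ^ 2 :=
          pow_le_pow_left₀ (by positivity) hd.le 2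
        calc ‖φ (z t)‖ ^ 2 / ‖z t + (m : ℂ)‖ ^ 2
            ≤ ‖φ (z t)‖ ^ 2 / (ε / 2) ^ 2 :=
              div_le_div_of_nonneg_left (by positivity) (by positivity) h2
        _ = 4 * ε⁻¹ ^ 2 * ‖φ (z t)‖ ^ 2 := by field_simp; ring
      calc ENNReal.ofReal (‖φ (z t)‖ ^ 2 / ‖z t + (m : ℂ)‖ ^ 2)
          ≤ ENNReal.ofReal (4 * ε⁻¹ ^ 2 * ‖φ (z t)‖ ^ 2) := ENNReal.ofReal_le_ofReal hbound
      _ ≤ _ := le_add_right le_rfl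
  calc ∫⁻ t : ℝ, ENNReal.ofReal (‖φ (z t)‖ ^ 2 / ‖z t + (m : ℂ)‖ ^ 2)
      ≤ ∫⁻ t : ℝ, (ENNReal.ofReal (4 * ε⁻¹ ^ 2 * ‖φ (z t)‖ ^ 2) +
          (Set.Icc (-(ε / 2)) (ε / 2)).indicator
            (fun _ => ENNReal.ofReal (ε⁻¹ ^ 2 * K ^ 2)) t) :=
        lintegral_mono key
  _ = (∫⁻ t : ℝ, ENNReal.ofReal (4 * ε⁻¹ ^ 2 * ‖φ (z t)‖ ^ 2)) +
        ∫⁻ t : ℝ, (Set.Icc (-(ε / 2)) (ε / 2)).indicator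
          (fun _ => ENNReal.ofReal (ε⁻¹ ^ 2 * K ^ 2)) t := by
        apply lintegral_add_left
        exact (ENNReal.measurable_ofReal.comp
          ((measurable_const.mul ((hmeas.norm).pow_const 2))))
  _ ≤ ENNReal.ofReal (4 * ε⁻¹ ^ 2 * (∫ t : ℝ, ‖φ (z t)‖ ^ 2)) +
        ENNReal.ofReal (ε⁻¹ * K ^ 2) := by
        gcongr
        · -- first integral
          have h1 : ∀ t : ℝ, ENNReal.ofReal (4 * ε⁻¹ ^ 2 * ‖φ (z t)‖ ^ 2) =
              ENNReal.ofReal (4 * ε⁻¹ ^ 2) * ENNReal.ofReal (‖φ (z t)‖ ^ 2) := fun t =>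
            ENNReal.ofReal_mul (by positivity)
          simp only [h1]
          rw [lintegral_const_mul _ ((hmeas.norm.pow_const 2).ennreal_ofReal)]
          rw [← ofReal_integral_eq_lintegral_ofReal hN
            (Filter.Eventually.of_forall fun t => by positivity)]
          rw [← ENNReal.ofReal_mul (by positivity)]
        · -- second integral
          rw [lintegral_indicator measurableSet_Icc]
          simp only [lintegral_const, Measure.restrict_apply MeasurableSet.univ,
            Set.univ_inter, Real.volume_Icc]
          have hIcc : ε / 2 - -(ε / 2) = ε := by ring
          rw [hIcc, ← ENNReal.ofReal_mul (by positivity)]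
          apply ENNReal.ofReal_le_ofReal
          have : ε⁻¹ ^ 2 * K ^ 2 * ε = ε⁻¹ * K ^ 2 := by
            field_simp
          rw [this]
  _ = ENNReal.ofReal (4 * ε⁻¹ ^ 2 * (∫ t : ℝ, ‖φ (z t)‖ ^ 2) + ε⁻¹ * K ^ 2) := by
        rw [ENNReal.ofReal_add ?_ (by positivity)]
        have hNnn : 0 ≤ ∫ t : ℝ, ‖φ (z t)‖ ^ 2 :=
          integral_nonneg fun t => by positivity
        positivity
end
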